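/- For any ∀⁺ type A of System F and any λ-term t: t ∈ |A| if and only if t β-reduces to some t' with ⊢_{F0} t' : A, where F0 is System F with ∀-elimination restricted to instantiation by type variables only. -/

import Mathlib

/-! Untyped λ-calculus (de Bruijn) and System F realizability semantics. -/

/-- Untyped λ-terms in de Bruijn notation. -/
inductive Lam : Type
  | var : ℕ → Lam
  | app : Lam → Lam → Lam
  | lam : Lam → Lam
deriving DecidableEq

namespace Lam

/-- Shift the free variables ≥ `d` up by one. -/
def lift (d : ℕ) : Lam → Lam
  | var n => if n < d then var n else var (n + 1)
  | app t u => app (lift d t) (lift d u)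
  | lam t => lam (lift (d + 1) t)

/-- Capture-avoiding substitution of `u` for the variable `k` (de Bruijn). -/
def subst : Lam → ℕ → Lam → Lam
  | var n, k, u => if n = k then u else if k < n then var (n - 1) else var n
  | app t s, k, u => app (subst t k u) (subst s k u)
  | lam t, k, u => lam (subst t (k + 1) (lift 0 u))

/-- Free variables of a term. -/
def fv : Lam → Finset ℕ
  | var n => {n}
  | app t u => fv t ∪ fv u
  | lam t => ((fv t).erase 0).image (· - 1)

/-- One-step β-reduction. -/
inductive Beta : Lam → Lam → Prop
  | beta (t u : Lam) : Beta (app (lam t) u) (subst t 0 u)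
  | appL {t t' : Lam} (u : Lam) : Beta t t' → Beta (app t u) (app t' u)
  | appR (t : Lam) {u u' : Lam} : Beta u u' → Beta (app t u) (app t u')
  | lam {t t' : Lam} : Beta t t' → Beta (lam t) (lam t')

/-- Many-step β-reduction. -/
def BetaStar : Lam → Lam → Prop := Relation.ReflTransGen Beta

/-- β-equivalence. -/
def BetaEq : Lam → Lam → Prop := Relation.EqvGen Beta

/-- One-step η-reduction. -/
inductive Eta : Lam → Lam → Prop
  | eta (t : Lam) : Eta (lam (app (lift 0 t) (var 0))) t
  | appL {t t' : Lam} (u : Lam) : Eta t t' → Eta (app t u) (app t' u)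
  | appR (t : Lam) {u u' : Lam} : Eta u u' → Eta (app t u) (app t u')
  | lam {t t' : Lam} : Eta t t' → Eta (lam t) (lam t')

/-- βη-equivalence. -/
def BetaEtaEq : Lam → Lam → Prop := Relation.EqvGen (fun t u => Beta t u ∨ Eta t u)

/-- One-step weak head reduction: contracts the weak head redex `(λ t) u`
possibly applied to further arguments. -/
inductive Whr : Lam → Lam → Prop
  | head (t u : Lam) : Whr (app (lam t) u) (subst t 0 u)
  | appL {t t' : Lam} (u : Lam) : Whr t t' → Whr (app t u) (app t' u)

/-- Many-step weak head reduction (`≻_f`). -/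
def WhrStar : Lam → Lam → Prop := Relation.ReflTransGen Whr

/-- A term is normal when it has no β-redex. -/
def Normal (t : Lam) : Prop := ∀ u, ¬ Beta t u

def Normalizable (t : Lam) : Prop := ∃ u, BetaStar t u ∧ Normal u

/-- `(t)v₁…vₘ`. -/
def appList (t : Lam) (l : List Lam) : Lam := l.foldl app t

end Lam

/-- A set of λ-terms is saturated when it is closed under weak-head-expansion. -/
def Saturated (G : Set Lam) : Prop := ∀ t u : Lam, Lam.WhrStar t u → u ∈ G → t ∈ G

/-- A set of λ-terms is β-saturated when it is closed under β-expansion. -/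
def BetaSaturated (G : Set Lam) : Prop := ∀ t u : Lam, Lam.BetaStar t u → u ∈ G → t ∈ G

/-- `G → G' = {u : ∀ t ∈ G, (u)t ∈ G'}`. -/
def arrowSet (G G' : Set Lam) : Set Lam := {u | ∀ t ∈ G, Lam.app u t ∈ G'}

/-- Types of System F (de Bruijn type variables). -/
inductive Ty : Type
  | var : ℕ → Ty
  | arr : Ty → Ty → Ty
  | all : Ty → Ty
deriving DecidableEq

namespace Ty

/-- Shift the free type variables ≥ `d` up by one. -/
def lift (d : ℕ) : Ty → Ty
  | var n => if n < d then var n else var (n + 1)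
  | arr A B => arr (lift d A) (lift d B)
  | all A => all (lift (d + 1) A)

/-- Capture-avoiding substitution of the type `C` for the type variable `k`. -/
def subst : Ty → ℕ → Ty → Ty
  | var n, k, C => if n = k then C else if k < n then var (n - 1) else var n
  | arr A B, k, C => arr (subst A k C) (subst B k C)
  | all A, k, C => all (subst A (k + 1) (lift 0 C))

/-- Free type variables. -/
def fv : Ty → Finset ℕ
  | var n => {n}
  | arr A B => fv A ∪ fv B
  | all A => ((fv A).erase 0).image (· - 1)

end Ty

mutual
  /-- ∀⁺ types: types with positive quantifiers. -/
  inductive PosTy : Ty → Prop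
    | var (n : ℕ) : PosTy (Ty.var n)
    | arr {B A : Ty} : NegTy B → PosTy A → PosTy (Ty.arr B A)
    | all {A : Ty} : PosTy A → 0 ∈ A.fv → PosTy (Ty.all A)
  /-- ∀⁻ types: types with negative quantifiers. -/
  inductive NegTy : Ty → Prop
    | var (n : ℕ) : NegTy (Ty.var n)
    | arr {B A : Ty} : PosTy B → NegTy A → NegTy (Ty.arr B A)
end

/-- Typing contexts: a partial assignment of types to (de Bruijn) term variables. -/
def Ctx : Type := ℕ → Option Ty

def Ctx.empty : Ctx := fun _ => none

def Ctx.cons (B : Ty) (Γ : Ctx) : Ctx := fun n =>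
  match n with
  | 0 => some B
  | n + 1 => Γ n

/-- Shift all type variables of a context (used for ∀-introduction: the fresh
type variable `0` does not occur in the shifted context). -/
def Ctx.liftTy (Γ : Ctx) : Ctx := fun n => (Γ n).map (Ty.lift 0)

/-- Curry-style typing of System F. -/
inductive TyJ : Ctx → Lam → Ty → Prop
  | var {Γ : Ctx} {x : ℕ} {A : Ty} : Γ x = some A → TyJ Γ (Lam.var x) A
  | lam {Γ : Ctx} {B C : Ty} {t : Lam} :
      TyJ (Ctx.cons B Γ) t C → TyJ Γ (Lam.lam t) (Ty.arr B C)
  | app {Γ : Ctx} {B C : Ty} {u v : Lam} :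
      TyJ Γ u (Ty.arr B C) → TyJ Γ v B → TyJ Γ (Lam.app u v) C
  | allI {Γ : Ctx} {A : Ty} {t : Lam} :
      TyJ (Ctx.liftTy Γ) t A → TyJ Γ t (Ty.all A)
  | allE {Γ : Ctx} {A : Ty} {t : Lam} (C : Ty) :
      TyJ Γ t (Ty.all A) → TyJ Γ t (Ty.subst A 0 C)

/-- System F0 : System F where ∀-elimination only instantiates by type variables. -/
inductive TyJ0 : Ctx → Lam → Ty → Prop
  | var {Γ : Ctx} {x : ℕ} {A : Ty} : Γ x = some A → TyJ0 Γ (Lam.var x) A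
  | lam {Γ : Ctx} {B C : Ty} {t : Lam} :
      TyJ0 (Ctx.cons B Γ) t C → TyJ0 Γ (Lam.lam t) (Ty.arr B C)
  | app {Γ : Ctx} {B C : Ty} {u v : Lam} :
      TyJ0 Γ u (Ty.arr B C) → TyJ0 Γ v B → TyJ0 Γ (Lam.app u v) C
  | allI {Γ : Ctx} {A : Ty} {t : Lam} :
      TyJ0 (Ctx.liftTy Γ) t A → TyJ0 Γ t (Ty.all A)
  | allE {Γ : Ctx} {A : Ty} {t : Lam} (Y : ℕ) :
      TyJ0 Γ t (Ty.all A) → TyJ0 Γ t (Ty.subst A 0 (Ty.var Y))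

/-- Interpretations: assignments of sets of λ-terms to type variables. -/
def Interp : Type := ℕ → Set Lam

def Interp.cons (G : Set Lam) (I : Interp) : Interp := fun n =>
  match n with
  | 0 => G
  | n + 1 => I n

/-- Interpretation of types, parameterized by the admissibility class `C` of
sets used to interpret type variables (e.g. `Saturated`). -/
def interpC (C : Set Lam → Prop) : Ty → Interp → Set Lam
  | Ty.var n, I => I n
  | Ty.arr A B, I => arrowSet (interpC C A I) (interpC C B I)
  | Ty.all A, I => ⋂ (G : Set Lam) (_ : C G), interpC C A (Interp.cons G I)

/-- Girard–Krivine interpretation `|A|_I` with saturated sets. -/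
def interp : Ty → Interp → Set Lam := interpC Saturated

/-- `|A|`, the intersection of `|A|_I` over all admissible interpretations. -/
def SemC (C : Set Lam → Prop) (A : Ty) : Set Lam :=
  {t | ∀ I : Interp, (∀ n, C (I n)) → t ∈ interpC C A I}

/-- `|A| = ⋂_I |A|_I` over interpretations into saturated sets. -/
def Sem (A : Ty) : Set Lam := SemC Saturated A


/-! ### Part 1: λ-term renaming and simultaneous substitution calculus -/

namespace LC
open Lam

/-- lift a renaming under a binder -/
def liftR (r : ℕ → ℕ) : ℕ → ℕ
  | 0 => 0
  | n + 1 => r n + 1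

/-- renaming action on terms -/
def ren (r : ℕ → ℕ) : Lam → Lam
  | .var n => .var (r n)
  | .app t u => .app (ren r t) (ren r u)
  | .lam t => .lam (ren (liftR r) t)

/-- lift a simultaneous substitution under a binder -/
def liftS (σ : ℕ → Lam) : ℕ → Lam
  | 0 => .var 0
  | n + 1 => ren Nat.succ (σ n)

/-- simultaneous substitution -/
def msub (σ : ℕ → Lam) : Lam → Lam
  | .var n => σ n
  | .app t u => .app (msub σ t) (msub σ u)
  | .lam t => .lam (msub (liftS σ) t)

/-- free-variable predicate -/
def FVp : Lam → ℕ → Prop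
  | .var n, x => n = x
  | .app t u, x => FVp t x ∨ FVp u x
  | .lam t, x => FVp t (x + 1)

theorem ren_congr {r r' : ℕ → ℕ} (t : Lam) (h : ∀ x, FVp t x → r x = r' x) :
    ren r t = ren r' t := by
  induction t generalizing r r' with
  | var n => simp [ren, h n rfl]
  | app a b iha ihb =>
      simp only [ren]
      rw [iha (fun x hx => h x (Or.inl hx)), ihb (fun x hx => h x (Or.inr hx))]
  | lam a ih =>
      simp only [ren]
      rw [ih (fun x hx => ?_)]
      cases x with
      | zero => rfl
      | succ x => simp only [liftR, h (x) hx]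

theorem ren_comp (r s : ℕ → ℕ) (t : Lam) : ren r (ren s t) = ren (r ∘ s) t := by
  induction t generalizing r s with
  | var n => rfl
  | app a b iha ihb => simp [ren, iha, ihb]
  | lam a ih =>
      simp only [ren, ih]
      congr 1
      apply ren_congr
      intro x _
      cases x <;> rfl

theorem msub_ren (σ : ℕ → Lam) (r : ℕ → ℕ) (t : Lam) :
    msub σ (ren r t) = msub (σ ∘ r) t := by
  induction t generalizing σ r with
  | var n => rfl
  | app a b iha ihb => simp [ren, msub, iha, ihb]
  | lam a ih =>
      simp only [ren, msub, ih]
      have : liftS σ ∘ liftR r = liftS (σ ∘ r) := funext fun x => by cases x <;> rfl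
      rw [this]

theorem ren_msub (r : ℕ → ℕ) (σ : ℕ → Lam) (t : Lam) :
    ren r (msub σ t) = msub (ren r ∘ σ) t := by
  induction t generalizing σ r with
  | var n => rfl
  | app a b iha ihb => simp [ren, msub, iha, ihb]
  | lam a ih =>
      simp only [ren, msub, ih]
      have : ren (liftR r) ∘ liftS σ = liftS (ren r ∘ σ) := funext fun x => by
        cases x with
        | zero => rfl
        | succ x =>
            show ren (liftR r) (ren Nat.succ (σ x)) = ren Nat.succ (ren r (σ x))
            rw [ren_comp, ren_comp]
            exact ren_congr (σ x) (fun y _ => rfl)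
      rw [this]

theorem msub_comp (σ τ : ℕ → Lam) (t : Lam) :
    msub σ (msub τ t) = msub (fun n => msub σ (τ n)) t := by
  induction t generalizing σ τ with
  | var n => rfl
  | app a b iha ihb => simp [msub, iha, ihb]
  | lam a ih =>
      simp only [msub, ih]
      have : (fun n => msub (liftS σ) (liftS τ n)) = liftS (fun n => msub σ (τ n)) :=
        funext fun x => by
          cases x with
          | zero => rfl
          | succ x =>
              show msub (liftS σ) (ren Nat.succ (τ x)) = ren Nat.succ (msub σ (τ x))
              rw [msub_ren, ren_msub]
              rfl
      rw [this]

theorem msub_congr {σ σ' : ℕ → Lam} (t : Lam) (h : ∀ x, FVp t x → σ x = σ' x) :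
    msub σ t = msub σ' t := by
  induction t generalizing σ σ' with
  | var n => exact h n rfl
  | app a b iha ihb =>
      simp only [msub]
      rw [iha (fun x hx => h x (Or.inl hx)), ihb (fun x hx => h x (Or.inr hx))]
  | lam a ih =>
      simp only [msub]
      rw [ih (fun x hx => ?_)]
      cases x with
      | zero => rfl
      | succ x => simp only [liftS, h x hx]

theorem msub_var (t : Lam) : msub Lam.var t = t := by
  induction t with
  | var n => rfl
  | app a b iha ihb => simp [msub, iha, ihb]
  | lam a ih =>
      simp only [msub]
      rw [msub_congr a (σ' := Lam.var) (fun x _ => ?_), ih]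
      cases x <;> rfl

theorem ren_eq_msub (r : ℕ → ℕ) (t : Lam) : ren r t = msub (fun n => Lam.var (r n)) t := by
  induction t generalizing r with
  | var n => rfl
  | app a b iha ihb => simp [ren, msub, iha, ihb]
  | lam a ih =>
      simp only [ren, msub, ih]
      congr 1
      apply msub_congr
      intro x _
      cases x <;> rfl

theorem ren_id (t : Lam) : ren id t = t := by
  rw [ren_eq_msub]
  have : (fun n => Lam.var (id n : ℕ)) = Lam.var := rfl
  rw [this, msub_var]

/-- `Lam.lift` is a renaming -/
def shiftAt (d : ℕ) : ℕ → ℕ := fun n => if n < d then n else n + 1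

theorem lift_eq_ren (d : ℕ) (t : Lam) : Lam.lift d t = ren (shiftAt d) t := by
  induction t generalizing d with
  | var n => simp only [Lam.lift, ren, shiftAt]; split <;> rfl
  | app a b iha ihb => simp [Lam.lift, ren, iha, ihb]
  | lam a ih =>
      simp only [Lam.lift, ren, ih]
      congr 1
      apply ren_congr
      intro x _
      cases x with
      | zero => simp [liftR, shiftAt]
      | succ x =>
          simp only [liftR, shiftAt]
          by_cases h : x < d
          · simp [h, Nat.succ_lt_succ h]
          · simp [h, fun hh => h (Nat.lt_of_succ_lt_succ hh)]

theorem lift0_eq_ren (t : Lam) : Lam.lift 0 t = ren Nat.succ t := by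
  rw [lift_eq_ren]
  apply ren_congr
  intro x _
  simp [shiftAt]

/-- single substitution as a simultaneous one -/
def sub1 (k : ℕ) (u : Lam) : ℕ → Lam := fun n =>
  if n = k then u else if k < n then .var (n - 1) else .var n

theorem subst_eq_msub (t : Lam) (k : ℕ) (u : Lam) :
    Lam.subst t k u = msub (sub1 k u) t := by
  induction t generalizing k u with
  | var n => simp only [Lam.subst, msub, sub1]
  | app a b iha ihb => simp [Lam.subst, msub, iha, ihb]
  | lam a ih =>
      simp only [Lam.subst, msub, ih]
      have : sub1 (k+1) (Lam.lift 0 u) = liftS (sub1 k u) := funext fun n => by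
        cases n with
      | zero => simp [liftS, sub1]
      | succ n =>
          simp only [liftS, sub1, lift0_eq_ren]
          by_cases h : n = k
          · simp [h]
          · have h' : ¬ (n + 1 = k + 1) := by omega
            by_cases h2 : k < n
            · have hx : k + 1 < n + 1 := by omega
              simp [h, h', h2, hx, ren]
              congr 1
              omega
            · have hx : ¬ (k + 1 < n + 1) := by omega
              simp [h, h', h2, hx, ren]
      rw [this]

/-- cons for substitutions -/
def scons (u : Lam) (σ : ℕ → Lam) : ℕ → Lam
  | 0 => u
  | n + 1 => σ n

theorem subst0_eq_msub (t : Lam) (u : Lam) :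
    Lam.subst t 0 u = msub (scons u Lam.var) t := by
  rw [subst_eq_msub]
  apply msub_congr
  intro x _
  cases x with
  | zero => rfl
  | succ x => simp [sub1, scons]

/-- THE key σ-calculus identity -/
theorem subst_msub_lift (σ : ℕ → Lam) (t u : Lam) :
    Lam.subst (msub (liftS σ) t) 0 u = msub (scons u σ) t := by
  rw [subst0_eq_msub, msub_comp]
  apply msub_congr
  intro x _
  cases x with
  | zero => rfl
  | succ x =>
      simp only [liftS, msub_ren]
      have : (fun n => msub (scons u Lam.var) (Lam.var (Nat.succ n))) = Lam.var := rfl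
      show msub ((fun v => msub (scons u Lam.var) v) ∘ (Lam.var ∘ Nat.succ)) (σ x) = scons u σ (x+1)
      rw [show ((fun v => msub (scons u Lam.var) v) ∘ (Lam.var ∘ Nat.succ)) = Lam.var from rfl]
      rw [msub_var]
      rfl

theorem msub_scons_comm (σ : ℕ → Lam) (u : Lam) (t : Lam) :
    msub σ (Lam.subst t 0 u) = Lam.subst (msub (liftS σ) t) 0 (msub σ u) := by
  rw [subst_msub_lift, subst0_eq_msub, msub_comp]
  apply msub_congr
  intro x _
  cases x with
  | zero => rfl
  | succ x => rfl

theorem ren_subst0 (r : ℕ → ℕ) (t u : Lam) :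
    ren r (Lam.subst t 0 u) = Lam.subst (ren (liftR r) t) 0 (ren r u) := by
  rw [ren_eq_msub, msub_scons_comm]
  congr 1
  · rw [ren_eq_msub (liftR r) t]
    apply msub_congr
    intro x _
    cases x with
    | zero => rfl
    | succ x => simp [liftS, liftR, ren]
  · rw [ren_eq_msub]

/-- free variables under renaming -/
theorem FVp_ren {t : Lam} {r : ℕ → ℕ} {x : ℕ} :
    FVp (ren r t) x ↔ ∃ y, FVp t y ∧ r y = x := by
  induction t generalizing r x with
  | var n =>
      constructor
      · intro h; exact ⟨n, rfl, h⟩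
      · rintro ⟨y, rfl, h⟩; exact h
  | app a b iha ihb =>
      simp only [ren, FVp, iha, ihb]
      constructor
      · rintro (⟨y, hy, hr⟩ | ⟨y, hy, hr⟩) <;> exact ⟨y, by tauto, hr⟩
      · rintro ⟨y, hy | hy, hr⟩
        · exact Or.inl ⟨y, hy, hr⟩
        · exact Or.inr ⟨y, hy, hr⟩
  | lam a ih =>
      simp only [ren, FVp, ih]
      constructor
      · rintro ⟨y, hy, hr⟩
        cases y with
        | zero => simp [liftR] at hr
        | succ y => exact ⟨y, hy, by simpa [liftR] using hr⟩
      · rintro ⟨y, hy, hr⟩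
        exact ⟨y + 1, hy, by simp [liftR, hr]⟩

theorem FVp_msub {t : Lam} {σ : ℕ → Lam} {x : ℕ} :
    FVp (msub σ t) x ↔ ∃ y, FVp t y ∧ FVp (σ y) x := by
  induction t generalizing σ x with
  | var n =>
      constructor
      · intro h; exact ⟨n, rfl, h⟩
      · rintro ⟨y, rfl, h⟩; exact h
  | app a b iha ihb =>
      simp only [msub, FVp, iha, ihb]
      constructor
      · rintro (⟨y, hy, hr⟩ | ⟨y, hy, hr⟩) <;> exact ⟨y, by tauto, hr⟩
      · rintro ⟨y, hy | hy, hr⟩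
        · exact Or.inl ⟨y, hy, hr⟩
        · exact Or.inr ⟨y, hy, hr⟩
  | lam a ih =>
      simp only [msub, FVp, ih]
      constructor
      · rintro ⟨y, hy, hr⟩
        cases y with
        | zero => simp [liftS, FVp] at hr
        | succ y =>
            simp only [liftS] at hr
            rw [FVp_ren] at hr
            obtain ⟨z, hz, hzx⟩ := hr
            have : z = x := by omega
            exact ⟨y, hy, this ▸ hz⟩
      · rintro ⟨y, hy, hr⟩
        refine ⟨y + 1, hy, ?_⟩
        simp only [liftS]
        rw [FVp_ren]
        exact ⟨x, hr, rfl⟩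

theorem mem_fv_iff (t : Lam) (x : ℕ) : x ∈ Lam.fv t ↔ FVp t x := by
  induction t generalizing x with
  | var n => simp [Lam.fv, FVp, eq_comm]
  | app a b iha ihb => simp [Lam.fv, FVp, iha, ihb]
  | lam a ih =>
      simp only [Lam.fv, FVp, Finset.mem_image, Finset.mem_erase]
      constructor
      · rintro ⟨y, ⟨hy0, hy⟩, rfl⟩
        obtain ⟨y, rfl⟩ := Nat.exists_eq_succ_of_ne_zero hy0
        simpa using (ih (y + 1)).1 hy
      · intro h
        exact ⟨x + 1, ⟨Nat.succ_ne_zero x, (ih _).2 h⟩, rfl⟩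

end LC
/-! ### Part 2: β and weak-head reduction lemmas -/

namespace LC
open Lam

theorem Beta_msub {t t' : Lam} (h : Beta t t') (σ : ℕ → Lam) :
    Beta (msub σ t) (msub σ t') := by
  induction h generalizing σ with
  | beta a b =>
      have : msub σ (Lam.subst a 0 b) = Lam.subst (msub (liftS σ) a) 0 (msub σ b) :=
        msub_scons_comm σ b a
      rw [this]
      exact Beta.beta _ _
  | appL u _ ih => exact Beta.appL _ (ih σ)
  | appR t _ ih => exact Beta.appR _ (ih σ)
  | lam _ ih => exact Beta.lam (ih (liftS σ))

theorem Beta_ren {t t' : Lam} (h : Beta t t') (r : ℕ → ℕ) :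
    Beta (ren r t) (ren r t') := by
  rw [ren_eq_msub, ren_eq_msub]
  exact Beta_msub h _

theorem BetaStar.app_congL {t t' : Lam} (u : Lam) (h : BetaStar t t') :
    BetaStar (Lam.app t u) (Lam.app t' u) :=
  Relation.ReflTransGen.lift (fun t => Lam.app t u) (fun _ _ hb => Beta.appL u hb) _ _ h

theorem BetaStar.app_congR (t : Lam) {u u' : Lam} (h : BetaStar u u') :
    BetaStar (Lam.app t u) (Lam.app t u') :=
  Relation.ReflTransGen.lift (fun u => Lam.app t u) (fun _ _ hb => Beta.appR t hb) _ _ h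

theorem BetaStar.app_cong {t t' u u' : Lam} (h : BetaStar t t') (h' : BetaStar u u') :
    BetaStar (Lam.app t u) (Lam.app t' u') :=
  (BetaStar.app_congL u h).trans (BetaStar.app_congR t' h')

theorem BetaStar.lam_cong {t t' : Lam} (h : BetaStar t t') :
    BetaStar (Lam.lam t) (Lam.lam t') :=
  Relation.ReflTransGen.lift Lam.lam (fun _ _ hb => Beta.lam hb) _ _ h

theorem BetaStar_msub {t t' : Lam} (h : BetaStar t t') (σ : ℕ → Lam) :
    BetaStar (msub σ t) (msub σ t') :=
  Relation.ReflTransGen.lift (msub σ) (fun _ _ hb => Beta_msub hb σ) _ _ h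

theorem BetaStar_ren {t t' : Lam} (h : BetaStar t t') (r : ℕ → ℕ) :
    BetaStar (ren r t) (ren r t') :=
  Relation.ReflTransGen.lift (ren r) (fun _ _ hb => Beta_ren hb r) _ _ h

/-- β-reduction is reflected by renamings. -/
theorem Beta_ren_reflect {t : Lam} {r : ℕ → ℕ} {u : Lam} (h : Beta (ren r t) u) :
    ∃ t', Beta t t' ∧ u = ren r t' := by
  induction t generalizing u r with
  | var n => cases h
  | app a b iha ihb =>
      cases a with
      | var m => cases h with
          | appL _ hb => cases hb
          | appR _ hb =>
              obtain ⟨b', hb', rfl⟩ := ihb hb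
              exact ⟨Lam.app (Lam.var m) b', Beta.appR _ hb', rfl⟩
      | app a1 a2 =>
          cases h with
          | appL _ hb =>
              obtain ⟨a', ha', rfl⟩ := iha hb
              exact ⟨Lam.app a' b, Beta.appL _ ha', rfl⟩
          | appR _ hb =>
              obtain ⟨b', hb', rfl⟩ := ihb hb
              exact ⟨Lam.app (Lam.app a1 a2) b', Beta.appR _ hb', rfl⟩
      | lam a1 =>
          cases h with
          | beta _ _ =>
              exact ⟨Lam.subst a1 0 b, Beta.beta _ _, (ren_subst0 r a1 b).symm⟩
          | appL _ hb =>
              obtain ⟨a', ha', rfl⟩ := iha hb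
              exact ⟨Lam.app a' b, Beta.appL _ ha', rfl⟩
          | appR _ hb =>
              obtain ⟨b', hb', rfl⟩ := ihb hb
              exact ⟨Lam.app (Lam.lam a1) b', Beta.appR _ hb', rfl⟩
  | lam a ih =>
      cases h with
      | lam hb =>
          obtain ⟨a', ha', rfl⟩ := ih hb
          exact ⟨Lam.lam a', Beta.lam ha', rfl⟩

theorem BetaStar_ren_reflect {t : Lam} {r : ℕ → ℕ} {u : Lam} (h : BetaStar (ren r t) u) :
    ∃ t', BetaStar t t' ∧ u = ren r t' := by
  induction h with
  | refl => exact ⟨t, Relation.ReflTransGen.refl, rfl⟩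
  | tail _ hstep ih =>
      obtain ⟨t', ht', rfl⟩ := ih
      obtain ⟨t'', ht'', rfl⟩ := Beta_ren_reflect hstep
      exact ⟨t'', ht'.tail ht'', rfl⟩

/-! Normal forms -/

theorem normal_var (n : ℕ) : Normal (Lam.var n) := fun u h => by cases h

theorem normal_lam_iff {t : Lam} : Normal (Lam.lam t) ↔ Normal t := by
  constructor
  · intro h u hu
    exact h (Lam.lam u) (Beta.lam hu)
  · intro h u hu
    cases hu with
    | lam hb => exact h _ hb

theorem normal_app_elim {a b : Lam} (h : Normal (Lam.app a b)) :
    Normal a ∧ Normal b ∧ ∀ q, a ≠ Lam.lam q := by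
  refine ⟨fun u hu => h _ (Beta.appL b hu), fun u hu => h _ (Beta.appR a hu), ?_⟩
  rintro q rfl
  exact h _ (Beta.beta q b)

theorem normal_app_intro {a b : Lam} (ha : Normal a) (hb : Normal b)
    (hq : ∀ q, a ≠ Lam.lam q) : Normal (Lam.app a b) := by
  intro u hu
  cases hu with
  | beta t u => exact hq t rfl
  | appL _ h => exact ha _ h
  | appR _ h => exact hb _ h

theorem normal_ren_reflect {t : Lam} {r : ℕ → ℕ} (h : Normal (ren r t)) : Normal t :=
  fun u hu => h (ren r u) (Beta_ren hu r)

theorem normal_no_reduction {t u : Lam} (ht : Normal t) (h : BetaStar t u) : u = t := by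
  induction h with
  | refl => rfl
  | tail hs hstep ih => subst ih; exact absurd hstep (ht _)

theorem betastar_var {x : ℕ} {u : Lam} (h : BetaStar (Lam.var x) u) : u = Lam.var x :=
  normal_no_reduction (normal_var x) h

/-- neutral (variable-headed) terms -/
inductive NN : Lam → Prop
  | var (x : ℕ) : NN (Lam.var x)
  | app {n : Lam} (v : Lam) : NN n → NN (Lam.app n v)

theorem NN_not_lam {a : Lam} (h : NN a) : ∀ q, a ≠ Lam.lam q := by
  cases h <;> simp

theorem normal_shape {a : Lam} (ha : Normal a) :
    (∃ q, a = Lam.lam q ∧ Normal q) ∨ NN a := by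
  induction a with
  | var n => exact Or.inr (NN.var n)
  | lam q _ => exact Or.inl ⟨q, rfl, normal_lam_iff.1 ha⟩
  | app x y ihx _ =>
      obtain ⟨hx, hy, hq⟩ := normal_app_elim ha
      rcases ihx hx with ⟨q, rfl, _⟩ | hnn
      · exact absurd rfl (hq q)
      · exact Or.inr (NN.app y hnn)

/-! free variables along reduction -/

theorem FVp_subst0_elim {a b : Lam} {x : ℕ} (h : FVp (Lam.subst a 0 b) x) :
    FVp a (x + 1) ∨ FVp b x := by
  rw [subst0_eq_msub] at h
  rw [FVp_msub] at h
  obtain ⟨y, hy, hsy⟩ := h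
  cases y with
  | zero => exact Or.inr hsy
  | succ y =>
      have : y = x := hsy
      exact Or.inl (this ▸ hy)

theorem FVp_beta {t t' : Lam} (h : Beta t t') {x : ℕ} (hx : FVp t' x) : FVp t x := by
  induction h generalizing x with
  | beta a b =>
      rcases FVp_subst0_elim hx with h1 | h1
      · exact Or.inl h1
      · exact Or.inr h1
  | appL u _ ih => rcases hx with h1 | h1
                   · exact Or.inl (ih h1)
                   · exact Or.inr h1
  | appR t _ ih => rcases hx with h1 | h1
                   · exact Or.inl h1
                   · exact Or.inr (ih h1)
  | lam _ ih => exact ih hx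

theorem FVp_betastar {t t' : Lam} (h : BetaStar t t') {x : ℕ} (hx : FVp t' x) : FVp t x := by
  induction h with
  | refl => exact hx
  | tail _ hstep ih => exact ih (FVp_beta hstep hx)

/-! weak head reduction -/

theorem Whr_msub {t t' : Lam} (h : Whr t t') (σ : ℕ → Lam) :
    Whr (msub σ t) (msub σ t') := by
  induction h generalizing σ with
  | head a b =>
      have : msub σ (Lam.subst a 0 b) = Lam.subst (msub (liftS σ) a) 0 (msub σ b) :=
        msub_scons_comm σ b a
      rw [this]
      exact Whr.head _ _
  | appL u _ ih => exact Whr.appL _ (ih σ)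

theorem Whr_beta {t t' : Lam} (h : Whr t t') : Beta t t' := by
  induction h with
  | head a b => exact Beta.beta a b
  | appL u _ ih => exact Beta.appL u ih

theorem WhrStar_betaStar {t t' : Lam} (h : WhrStar t t') : BetaStar t t' :=
  Relation.ReflTransGen.mono (fun _ _ hb => Whr_beta hb) _ _ h

theorem WhrStar.app_congL {t t' : Lam} (u : Lam) (h : WhrStar t t') :
    WhrStar (Lam.app t u) (Lam.app t' u) :=
  Relation.ReflTransGen.lift (fun t => Lam.app t u) (fun _ _ hb => Whr.appL u hb) _ _ h

theorem WhrStar_msub {t t' : Lam} (h : WhrStar t t') (σ : ℕ → Lam) :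
    WhrStar (msub σ t) (msub σ t') :=
  Relation.ReflTransGen.lift (msub σ) (fun _ _ hb => Whr_msub hb σ) _ _ h

end LC
/-! ### Part 3: parallel reduction and weak-head factorization -/

namespace LC
open Lam

inductive Par : Lam → Lam → Prop
  | var (n : ℕ) : Par (.var n) (.var n)
  | app {t t' u u' : Lam} : Par t t' → Par u u' → Par (.app t u) (.app t' u')
  | lam {t t' : Lam} : Par t t' → Par (.lam t) (.lam t')
  | beta {t t' u u' : Lam} : Par t t' → Par u u' →
      Par (.app (.lam t) u) (Lam.subst t' 0 u')

theorem Par.rfl (t : Lam) : Par t t := by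
  induction t with
  | var n => exact Par.var n
  | app a b iha ihb => exact Par.app iha ihb
  | lam a ih => exact Par.lam ih

theorem Beta_par {t t' : Lam} (h : Beta t t') : Par t t' := by
  induction h with
  | beta a b => exact Par.beta (Par.rfl a) (Par.rfl b)
  | appL u _ ih => exact Par.app ih (Par.rfl u)
  | appR t _ ih => exact Par.app (Par.rfl t) ih
  | lam _ ih => exact Par.lam ih

theorem Par_betaStar {t t' : Lam} (h : Par t t') : BetaStar t t' := by
  induction h with
  | var n => exact .refl
  | app h1 h2 ih1 ih2 => exact BetaStar.app_cong ih1 ih2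
  | lam _ ih => exact BetaStar.lam_cong ih
  | @beta a a' b b' h1 h2 ih1 ih2 =>
      exact (BetaStar.app_cong (BetaStar.lam_cong ih1) ih2).trans
        (Relation.ReflTransGen.single (Beta.beta a' b'))

theorem Par_ren {t t' : Lam} (h : Par t t') (r : ℕ → ℕ) : Par (ren r t) (ren r t') := by
  induction h generalizing r with
  | var n => exact Par.rfl _
  | app h1 h2 ih1 ih2 => exact Par.app (ih1 r) (ih2 r)
  | lam _ ih => exact Par.lam (ih (liftR r))
  | beta h1 h2 ih1 ih2 =>
      have := Par.beta (ih1 (liftR r)) (ih2 r)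
      rwa [← ren_subst0] at this

theorem Par_msub {t t' : Lam} (h : Par t t') {σ σ' : ℕ → Lam}
    (hσ : ∀ n, Par (σ n) (σ' n)) : Par (msub σ t) (msub σ' t') := by
  induction h generalizing σ σ' with
  | var n => exact hσ n
  | app h1 h2 ih1 ih2 => exact Par.app (ih1 hσ) (ih2 hσ)
  | lam _ ih =>
      refine Par.lam (ih fun n => ?_)
      cases n with
      | zero => exact Par.rfl _
      | succ n => exact Par_ren (hσ n) Nat.succ
  | @beta a a' b b' h1 h2 ih1 ih2 =>
      have hb := Par.beta (ih1 (σ := liftS σ) (σ' := liftS σ') fun n => by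
        cases n with
        | zero => exact Par.rfl _
        | succ n => exact Par_ren (hσ n) Nat.succ) (ih2 hσ)
      rw [subst_msub_lift] at hb
      have heq : msub σ' (Lam.subst a' 0 b') = msub (scons (msub σ' b') σ') a' := by
        rw [subst0_eq_msub, msub_comp]
        apply msub_congr
        intro x _
        cases x <;> rfl
      rw [heq]
      exact hb

theorem Par_subst0 {t t' u u' : Lam} (h : Par t t') (h' : Par u u') :
    Par (Lam.subst t 0 u) (Lam.subst t' 0 u') := by
  rw [subst0_eq_msub, subst0_eq_msub]
  refine Par_msub h fun n => ?_
  cases n with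
  | zero => exact h'
  | succ n => exact Par.rfl _

/-- internal parallel reduction: no weak-head redex is contracted -/
inductive IntPar : Lam → Lam → Prop
  | var (n : ℕ) : IntPar (.var n) (.var n)
  | lam {t t' : Lam} : Par t t' → IntPar (.lam t) (.lam t')
  | app {t t' u u' : Lam} : IntPar t t' → Par u u' → IntPar (.app t u) (.app t' u')

theorem IntPar_par {t t' : Lam} (h : IntPar t t') : Par t t' := by
  induction h with
  | var n => exact Par.var n
  | lam h => exact Par.lam h
  | app _ h2 ih => exact Par.app ih h2

/-- substitution into an internal parallel reduction, with factored argument -/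
theorem IntPar_subst_fact {p q : Lam} (h : IntPar p q) {u u' w : Lam}
    (hu : Par u u') (hw : WhrStar u w) (hw' : IntPar w u') :
    ∃ v, WhrStar (Lam.subst p 0 u) v ∧ IntPar v (Lam.subst q 0 u') := by
  induction h with
  | var n =>
      cases n with
      | zero =>
          simp only [Lam.subst]
          exact ⟨w, hw, hw'⟩
      | succ n =>
          simp only [Lam.subst]
          have h1 : ¬ (n + 1 = 0) := by omega
          have h2 : (0:ℕ) < n + 1 := by omega
          simp only [h1, h2, if_true, if_false]
          exact ⟨_, Relation.ReflTransGen.refl, IntPar.var _⟩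
  | lam hp =>
      refine ⟨_, Relation.ReflTransGen.refl, ?_⟩
      simp only [Lam.subst]
      refine IntPar.lam ?_
      rw [subst_eq_msub, subst_eq_msub]
      refine Par_msub hp fun n => ?_
      cases n with
      | zero => simp [sub1]; exact Par.rfl _
      | succ n =>
          by_cases hn : n + 1 = 1
          · have : n = 0 := by omega
            subst this
            simp only [sub1, if_pos hn]
            rw [lift0_eq_ren, lift0_eq_ren]
            exact Par_ren hu Nat.succ
          · have h2 : sub1 1 (Lam.lift 0 u) (n+1) = sub1 1 (Lam.lift 0 u') (n+1) := by
              simp only [sub1, if_neg hn]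
            rw [h2]
            exact Par.rfl _
  | @app a a' b b' hp hq ih =>
      obtain ⟨v1, hv1, hv1'⟩ := ih
      refine ⟨Lam.app v1 (Lam.subst b 0 u), ?_, ?_⟩
      · simp only [Lam.subst]
        exact WhrStar.app_congL _ hv1
      · exact IntPar.app hv1' (Par_subst0 hq hu)

end LC
/-! ### Part 4: factorization theorems -/

namespace LC
open Lam

def IntParStar : Lam → Lam → Prop := Relation.ReflTransGen IntPar

/-- Takahashi: every parallel step factors as whr* followed by an internal parallel step. -/
theorem takahashi {t u : Lam} (h : Par t u) : ∃ v, WhrStar t v ∧ IntPar v u := by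
  induction h with
  | var n => exact ⟨_, Relation.ReflTransGen.refl, IntPar.var n⟩
  | @app a a' b b' h1 h2 ih1 ih2 =>
      obtain ⟨v1, hv1, hv1'⟩ := ih1
      exact ⟨Lam.app v1 b, WhrStar.app_congL b hv1, IntPar.app hv1' h2⟩
  | @lam a a' h ih => exact ⟨Lam.lam a, Relation.ReflTransGen.refl, IntPar.lam h⟩
  | @beta a a' b b' h1 h2 ih1 ih2 =>
      obtain ⟨p, hp, hp'⟩ := ih1
      obtain ⟨wb, hwb, hwb'⟩ := ih2
      obtain ⟨v, hv, hv'⟩ := IntPar_subst_fact hp' h2 hwb hwb'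
      refine ⟨v, ?_, hv'⟩
      have step1 : Whr (Lam.app (Lam.lam a) b) (Lam.subst a 0 b) := Whr.head a b
      have steps : WhrStar (Lam.subst a 0 b) (Lam.subst p 0 b) := by
        rw [subst0_eq_msub, subst0_eq_msub]
        exact WhrStar_msub hp _
      exact ((Relation.ReflTransGen.single step1).trans steps).trans hv

/-- pull a whr step backwards through an internal parallel step -/
theorem intpar_whr_swap {t u v : Lam} (h : IntPar t u) (hw : Whr u v) :
    ∃ w, WhrStar t w ∧ Par w v := by
  induction h generalizing v with
  | var n => cases hw
  | lam _ => cases hw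
  | @app a a' b b' h1 h2 ih =>
      cases hw with
      | head q u =>
          -- a' = lam q
          cases h1 with
          | @lam a1 a1' hl =>
              refine ⟨Lam.subst a1 0 b, Relation.ReflTransGen.single (Whr.head a1 b), ?_⟩
              exact Par_subst0 hl h2
      | @appL t1 t1' _ hw1 =>
          obtain ⟨w1, hw1', hp1⟩ := ih hw1
          exact ⟨Lam.app w1 b, WhrStar.app_congL b hw1', Par.app hp1 h2⟩

theorem intpar_whrStar_swap {a b c : Lam} (h : IntPar a b) (hw : WhrStar b c) :
    ∃ d, WhrStar a d ∧ IntPar d c := by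
  induction hw using Relation.ReflTransGen.head_induction_on generalizing a with
  | refl => exact ⟨a, Relation.ReflTransGen.refl, h⟩
  | head hstep _ ih =>
      obtain ⟨d1, hd1, hp⟩ := intpar_whr_swap h hstep
      obtain ⟨d2, hd2, hip⟩ := takahashi hp
      obtain ⟨d, hd, hip'⟩ := ih hip
      exact ⟨d, (hd1.trans hd2).trans hd, hip'⟩

theorem intparStar_whrStar_swap {a b c : Lam} (h : IntParStar a b) (hw : WhrStar b c) :
    ∃ d, WhrStar a d ∧ IntParStar d c := by
  induction h generalizing c with
  | refl => exact ⟨c, hw, Relation.ReflTransGen.refl⟩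
  | tail _ hstep ih =>
      obtain ⟨d0, hd0, hip⟩ := intpar_whrStar_swap hstep hw
      obtain ⟨d, hd, hips⟩ := ih hd0
      exact ⟨d, hd, hips.trans (Relation.ReflTransGen.single hip)⟩

/-- factorization of β-reduction into weak-head reduction followed by internal steps -/
theorem factorize {t u : Lam} (h : BetaStar t u) :
    ∃ v, WhrStar t v ∧ IntParStar v u := by
  induction h with
  | refl => exact ⟨t, Relation.ReflTransGen.refl, Relation.ReflTransGen.refl⟩
  | tail hs hstep ih =>
      obtain ⟨v, hv, hips⟩ := ih
      obtain ⟨v2, hv2, hip2⟩ := takahashi (Beta_par hstep)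
      obtain ⟨d, hd, hips'⟩ := intparStar_whrStar_swap hips hv2
      exact ⟨d, hv.trans hd, hips'.tail hip2⟩

/-! inversion of internal-parallel-star by target shape -/

theorem intpar_shape {v m : Lam} (h : IntPar v m) :
    (∀ n, m = Lam.var n → v = Lam.var n) ∧
    (∀ q, m = Lam.lam q → ∃ s, v = Lam.lam s ∧ Par s q) ∧
    (∀ q r, m = Lam.app q r → ∃ s1 s2, v = Lam.app s1 s2 ∧ IntPar s1 q ∧ Par s2 r) := by
  refine ⟨?_, ?_, ?_⟩
  · intro n hn
    subst hn
    cases h with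
    | var m => rfl
  · intro q hq
    subst hq
    cases h with
    | lam hp => exact ⟨_, rfl, hp⟩
  · intro q r hqr
    subst hqr
    cases h with
    | app h1 h2 => exact ⟨_, _, rfl, h1, h2⟩

theorem intparStar_var_inv {v : Lam} {n : ℕ} (h : IntParStar v (Lam.var n)) :
    v = Lam.var n := by
  induction h using Relation.ReflTransGen.head_induction_on with
  | refl => rfl
  | head hstep _ ih => exact (intpar_shape hstep).1 n ih

theorem intparStar_lam_inv {v q : Lam} (h : IntParStar v (Lam.lam q)) :
    ∃ s, v = Lam.lam s ∧ BetaStar s q := by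
  induction h using Relation.ReflTransGen.head_induction_on with
  | refl => exact ⟨q, rfl, Relation.ReflTransGen.refl⟩
  | head hstep _ ih =>
      obtain ⟨s1, rfl, hs1⟩ := ih
      obtain ⟨s, rfl, hp⟩ := (intpar_shape hstep).2.1 s1 rfl
      exact ⟨s, rfl, (Par_betaStar hp).trans hs1⟩

theorem intparStar_app_inv {v q r : Lam} (h : IntParStar v (Lam.app q r)) :
    ∃ s1 s2, v = Lam.app s1 s2 ∧ BetaStar s1 q ∧ BetaStar s2 r := by
  induction h using Relation.ReflTransGen.head_induction_on with
  | refl => exact ⟨q, r, rfl, Relation.ReflTransGen.refl, Relation.ReflTransGen.refl⟩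
  | head hstep _ ih =>
      obtain ⟨s1, s2, rfl, hs1, hs2⟩ := ih
      obtain ⟨w1, w2, rfl, hw1, hw2⟩ := (intpar_shape hstep).2.2 s1 s2 rfl
      exact ⟨w1, w2, rfl, (Par_betaStar (IntPar_par hw1)).trans hs1,
        (Par_betaStar hw2).trans hs2⟩

end LC
/-! ### Part 5: application decomposition; type-level renaming calculus -/

namespace LC
open Lam

theorem intparStar_betaStar {a b : Lam} (h : IntParStar a b) : BetaStar a b := by
  induction h with
  | refl => exact Relation.ReflTransGen.refl
  | tail _ hstep ih => exact ih.trans (Par_betaStar (IntPar_par hstep))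

theorem intpar_appF {a b m : Lam} (h : IntPar (Lam.app a b) m) :
    ∃ a' b', m = Lam.app a' b' ∧ IntPar a a' ∧ Par b b' := by
  cases h with
  | app h1 h2 => exact ⟨_, _, rfl, h1, h2⟩

theorem intparStar_appF {v w : Lam} (h : IntParStar v w) :
    ∀ a b, v = Lam.app a b →
    ∃ w1 w2, w = Lam.app w1 w2 ∧ BetaStar a w1 ∧ BetaStar b w2 := by
  induction h using Relation.ReflTransGen.head_induction_on with
  | refl =>
      intro a b hv
      exact ⟨a, b, hv, Relation.ReflTransGen.refl, Relation.ReflTransGen.refl⟩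
  | head hstep _ ih =>
      intro a b hv
      subst hv
      obtain ⟨a', b', heq, h1, h2⟩ := intpar_appF hstep
      obtain ⟨w1, w2, rfl, hw1, hw2⟩ := ih a' b' heq
      exact ⟨w1, w2, rfl, Relation.ReflTransGen.trans (Par_betaStar (IntPar_par h1)) hw1,
        Relation.ReflTransGen.trans (Par_betaStar h2) hw2⟩

theorem whrStar_app_path {w v : Lam} (h : WhrStar w v) :
    ∀ u z, w = Lam.app u z →
      (∃ u0, v = Lam.app u0 z ∧ WhrStar u u0) ∨
      (∃ u1, WhrStar u (Lam.lam u1) ∧ WhrStar (Lam.subst u1 0 z) v) := by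
  induction h using Relation.ReflTransGen.head_induction_on with
  | refl =>
      intro u z hw
      exact Or.inl ⟨u, hw, Relation.ReflTransGen.refl⟩
  | @head w m hstep htail ih =>
      intro u z hw
      subst hw
      cases hstep with
      | head q _ =>
          exact Or.inr ⟨q, Relation.ReflTransGen.refl, htail⟩
      | @appL _ u' _ hu =>
          rcases ih u' z rfl with ⟨u0, rfl, hu0⟩ | ⟨u1, hu1, hv⟩
          · exact Or.inl ⟨u0, rfl, Relation.ReflTransGen.head hu hu0⟩
          · exact Or.inr ⟨u1, Relation.ReflTransGen.head hu hu1, hv⟩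

/-- decomposition of a β-reduction starting from an application -/
theorem app_dec {u z w : Lam} (h : BetaStar (Lam.app u z) w) :
    (∃ w1 w2, w = Lam.app w1 w2 ∧ BetaStar u w1 ∧ BetaStar z w2) ∨
    (∃ u1, WhrStar u (Lam.lam u1) ∧ BetaStar (Lam.subst u1 0 z) w) := by
  obtain ⟨v, hv, hips⟩ := factorize h
  rcases whrStar_app_path hv u z rfl with ⟨u0, rfl, hu0⟩ | ⟨u1, hu1, hv2⟩
  · obtain ⟨w1, w2, rfl, h1, h2⟩ := intparStar_appF hips _ _ rfl
    exact Or.inl ⟨w1, w2, rfl, (WhrStar_betaStar hu0).trans h1, h2⟩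
  · exact Or.inr ⟨u1, hu1, (WhrStar_betaStar hv2).trans (intparStar_betaStar hips)⟩

/-! ### Type-level renaming -/

def renT (r : ℕ → ℕ) : Ty → Ty
  | .var n => .var (r n)
  | .arr a b => .arr (renT r a) (renT r b)
  | .all a => .all (renT (liftR r) a)

def FTp : Ty → ℕ → Prop
  | .var n, x => n = x
  | .arr a b, x => FTp a x ∨ FTp b x
  | .all a, x => FTp a (x + 1)

theorem renT_congr {r r' : ℕ → ℕ} (t : Ty) (h : ∀ x, FTp t x → r x = r' x) :
    renT r t = renT r' t := by
  induction t generalizing r r' with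
  | var n => simp [renT, h n rfl]
  | arr a b iha ihb =>
      simp only [renT]
      rw [iha (fun x hx => h x (Or.inl hx)), ihb (fun x hx => h x (Or.inr hx))]
  | all a ih =>
      simp only [renT]
      rw [ih (fun x hx => ?_)]
      cases x with
      | zero => rfl
      | succ x => simp only [liftR, h x hx]

theorem renT_comp (r s : ℕ → ℕ) (t : Ty) : renT r (renT s t) = renT (r ∘ s) t := by
  induction t generalizing r s with
  | var n => rfl
  | arr a b iha ihb => simp [renT, iha, ihb]
  | all a ih =>
      simp only [renT, ih]
      congr 1
      apply renT_congr
      intro x _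
      cases x <;> rfl

theorem renT_id (t : Ty) : renT id t = t := by
  induction t with
  | var n => rfl
  | arr a b iha ihb => simp [renT, iha, ihb]
  | all a ih =>
      simp only [renT]
      rw [renT_congr a (r' := id) (fun x _ => by cases x <;> rfl), ih]

theorem FTp_renT {t : Ty} {r : ℕ → ℕ} {x : ℕ} :
    FTp (renT r t) x ↔ ∃ y, FTp t y ∧ r y = x := by
  induction t generalizing r x with
  | var n =>
      constructor
      · intro h; exact ⟨n, rfl, h⟩
      · rintro ⟨y, rfl, h⟩; exact h
  | arr a b iha ihb =>
      simp only [renT, FTp, iha, ihb]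
      constructor
      · rintro (⟨y, hy, hr⟩ | ⟨y, hy, hr⟩) <;> exact ⟨y, by tauto, hr⟩
      · rintro ⟨y, hy | hy, hr⟩
        · exact Or.inl ⟨y, hy, hr⟩
        · exact Or.inr ⟨y, hy, hr⟩
  | all a ih =>
      simp only [renT, FTp, ih]
      constructor
      · rintro ⟨y, hy, hr⟩
        cases y with
        | zero => simp [liftR] at hr
        | succ y => exact ⟨y, hy, by simpa [liftR] using hr⟩
      · rintro ⟨y, hy, hr⟩
        exact ⟨y + 1, hy, by simp [liftR, hr]⟩

theorem mem_tfv_iff (t : Ty) (x : ℕ) : x ∈ Ty.fv t ↔ FTp t x := by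
  induction t generalizing x with
  | var n => simp [Ty.fv, FTp, eq_comm]
  | arr a b iha ihb => simp [Ty.fv, FTp, iha, ihb]
  | all a ih =>
      simp only [Ty.fv, FTp, Finset.mem_image, Finset.mem_erase]
      constructor
      · rintro ⟨y, ⟨hy0, hy⟩, rfl⟩
        obtain ⟨y, rfl⟩ := Nat.exists_eq_succ_of_ne_zero hy0
        simpa using (ih (y + 1)).1 hy
      · intro h
        exact ⟨x + 1, ⟨Nat.succ_ne_zero x, (ih _).2 h⟩, rfl⟩

theorem liftT_eq_renT (d : ℕ) (t : Ty) : Ty.lift d t = renT (shiftAt d) t := by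
  induction t generalizing d with
  | var n => simp only [Ty.lift, renT, shiftAt]; split <;> rfl
  | arr a b iha ihb => simp [Ty.lift, renT, iha, ihb]
  | all a ih =>
      simp only [Ty.lift, renT, ih]
      congr 1
      apply renT_congr
      intro x _
      cases x with
      | zero => simp [liftR, shiftAt]
      | succ x =>
          simp only [liftR, shiftAt]
          by_cases h : x < d
          · simp [h, Nat.succ_lt_succ h]
          · simp [h, fun hh => h (Nat.lt_of_succ_lt_succ hh)]

theorem liftT0_eq_renT (t : Ty) : Ty.lift 0 t = renT Nat.succ t := by
  rw [liftT_eq_renT]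
  apply renT_congr
  intro x _
  simp [shiftAt]

/-- substitution of a type variable is a renaming -/
def sfunT (k Y : ℕ) : ℕ → ℕ := fun n => if n = k then Y else if k < n then n - 1 else n

theorem substT_var_eq (t : Ty) (k Y : ℕ) :
    Ty.subst t k (Ty.var Y) = renT (sfunT k Y) t := by
  induction t generalizing k Y with
  | var n => simp only [Ty.subst, renT, sfunT]; split <;> [rfl; split <;> rfl]
  | arr a b iha ihb => simp [Ty.subst, renT, iha, ihb]
  | all a ih =>
      simp only [Ty.subst]
      have : Ty.lift 0 (Ty.var Y) = Ty.var (Y + 1) := rfl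
      rw [this, ih]
      simp only [renT]
      congr 1
      apply renT_congr
      intro x _
      cases x with
      | zero => simp [sfunT, liftR]
      | succ x =>
          simp only [sfunT, liftR]
          by_cases h : x = k
          · simp [h]
          · have h' : ¬ (x + 1 = k + 1) := by omega
            by_cases h2 : k < x
            · have h3 : k + 1 < x + 1 := by omega
              have h4 : x + 1 - 1 = (x-1) + 1 := by omega
              simp [h, h', h2, h3, h4]
            · have h3 : ¬ (k + 1 < x + 1) := by omega
              simp [h, h', h2, h3]

theorem substT_lift0 (t : Ty) (Y : ℕ) : Ty.subst (Ty.lift 0 t) 0 (Ty.var Y) = t := by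
  rw [liftT0_eq_renT, substT_var_eq, renT_comp]
  rw [renT_congr t (r' := id) (fun x _ => by simp [Function.comp, sfunT]), renT_id]

/-- quantifier-free types -/
def Qf : Ty → Prop
  | .var _ => True
  | .arr a b => Qf a ∧ Qf b
  | .all _ => False

theorem NegTy_arr_inv {a b : Ty} (h : NegTy (Ty.arr a b)) : PosTy a ∧ NegTy b := by
  cases h with
  | arr h1 h2 => exact ⟨h1, h2⟩

theorem PosTy_arr_inv {a b : Ty} (h : PosTy (Ty.arr a b)) : NegTy a ∧ PosTy b := by
  cases h with
  | arr h1 h2 => exact ⟨h1, h2⟩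

theorem PosTy_all_inv {a : Ty} (h : PosTy (Ty.all a)) : PosTy a ∧ 0 ∈ a.fv := by
  cases h with
  | all h1 h2 => exact ⟨h1, h2⟩

theorem not_negTy_all (a : Ty) : ¬ NegTy (Ty.all a) := by
  intro h; cases h

/-- positivity / negativity are preserved by type-variable renamings -/
theorem posneg_renT (A : Ty) : ∀ r : ℕ → ℕ,
    (PosTy A → PosTy (renT r A)) ∧ (NegTy A → NegTy (renT r A)) := by
  induction A with
  | var n => exact fun r => ⟨fun _ => PosTy.var _, fun _ => NegTy.var _⟩
  | arr a b iha ihb =>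
      intro r
      constructor
      · intro h
        obtain ⟨h1, h2⟩ := PosTy_arr_inv h
        exact PosTy.arr ((iha r).2 h1) ((ihb r).1 h2)
      · intro h
        obtain ⟨h1, h2⟩ := NegTy_arr_inv h
        exact NegTy.arr ((iha r).1 h1) ((ihb r).2 h2)
  | all a ih =>
      intro r
      refine ⟨fun h => ?_, fun h => absurd h (not_negTy_all a)⟩
      obtain ⟨h1, h2⟩ := PosTy_all_inv h
      refine PosTy.all ((ih (liftR r)).1 h1) ?_
      rw [mem_tfv_iff] at h2 ⊢
      rw [FTp_renT]
      exact ⟨0, h2, rfl⟩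

theorem PosTy_renT {A : Ty} (h : PosTy A) (r : ℕ → ℕ) : PosTy (renT r A) :=
  (posneg_renT A r).1 h

theorem NegTy_renT {A : Ty} (h : NegTy A) (r : ℕ → ℕ) : NegTy (renT r A) :=
  (posneg_renT A r).2 h

theorem NegTy_lift0 {A : Ty} (h : NegTy A) : NegTy (Ty.lift 0 A) := by
  rw [liftT0_eq_renT]; exact NegTy_renT h _

/-- no `0` free in a 0-lifted type -/
theorem not_FTp_lift0 (T : Ty) : ¬ FTp (Ty.lift 0 T) 0 := by
  rw [liftT0_eq_renT, FTp_renT]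
  rintro ⟨y, _, hy⟩
  exact Nat.succ_ne_zero y hy

end LC
/-! ### Part 6: interpretation lemmas and adequacy -/

namespace LC
open Lam

theorem interp_saturated (A : Ty) (I : Interp) (hI : ∀ n, Saturated (I n)) :
    Saturated (interp A I) := by
  induction A generalizing I with
  | var n => exact hI n
  | arr B C ihB ihC =>
      intro t u htu hu v hv
      exact ihC I hI _ _ (WhrStar.app_congL v htu) (hu v hv)
  | all A ih =>
      intro t u htu hu
      simp only [interp, interpC, Set.mem_iInter] at hu ⊢
      intro G hG
      refine ih (Interp.cons G I) (fun n => ?_) _ _ htu (hu G hG)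
      cases n with
      | zero => exact hG
      | succ n => exact hI n

theorem interp_var (n : ℕ) (I : Interp) : interp (Ty.var n) I = I n := rfl
theorem interp_arr (B C : Ty) (I : Interp) :
    interp (Ty.arr B C) I = arrowSet (interp B I) (interp C I) := rfl
theorem interp_all (A : Ty) (I : Interp) :
    interp (Ty.all A) I = ⋂ (G : Set Lam) (_ : Saturated G), interp A (Interp.cons G I) := rfl

theorem interp_renT (A : Ty) (r : ℕ → ℕ) (I : Interp) :
    interp (renT r A) I = interp A (fun n => I (r n)) := by
  induction A generalizing r I with
  | var n => rfl
  | arr B C ihB ihC => simp only [renT, interp_arr, ihB, ihC]; rfl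
  | all A ih =>
      simp only [renT, interp_all]
      show (⋂ (G : Set Lam) (_ : Saturated G), interp (renT (liftR r) A) (Interp.cons G I)) =
        ⋂ (G : Set Lam) (_ : Saturated G), interp A (Interp.cons G (fun n => I (r n)))
      have key : ∀ G : Set Lam, interp (renT (liftR r) A) (Interp.cons G I) =
          interp A (Interp.cons G (fun n => I (r n))) := by
        intro G
        have henv : (fun n => Interp.cons G I (liftR r n)) =
            Interp.cons G (fun n => I (r n)) := funext fun n => by cases n <;> rfl
        rw [ih (liftR r) (Interp.cons G I), henv]
      apply Set.ext
      intro t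
      simp only [Set.mem_iInter]
      constructor
      · intro h G hG
        have := h G hG
        rwa [key G] at this
      · intro h G hG
        rw [key G]
        exact h G hG

theorem interp_substT_var (A : Ty) (Y : ℕ) (I : Interp) :
    interp (Ty.subst A 0 (Ty.var Y)) I = interp A (Interp.cons (I Y) I) := by
  rw [substT_var_eq, interp_renT]
  have heq : (fun n => I (sfunT 0 Y n)) = Interp.cons (I Y) I := by
    funext n
    cases n with
    | zero => rfl
    | succ n =>
        show I (sfunT 0 Y (n+1)) = I n
        simp [sfunT]
  rw [heq]

theorem interp_lift0 (B : Ty) (G : Set Lam) (I : Interp) :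
    interp (Ty.lift 0 B) (Interp.cons G I) = interp B I := by
  rw [liftT0_eq_renT, interp_renT]
  congr 1

/-- Adequacy with β-expansion: if `s` β-reduces to a typed term `p`, then every
substitution instance of `s` by semantic values is in the interpretation. -/
theorem adequacyExp {Γ : Ctx} {p : Lam} {A : Ty} (d : TyJ0 Γ p A) :
    ∀ (I : Interp), (∀ n, Saturated (I n)) →
    ∀ (σ : ℕ → Lam), (∀ x B, Γ x = some B → σ x ∈ interp B I) →
    ∀ s, BetaStar s p → msub σ s ∈ interp A I := by
  induction d with
  | @var Γ x A hx =>
      intro I hI σ hσ s hs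
      obtain ⟨v, hw, hips⟩ := factorize hs
      have hv := intparStar_var_inv hips
      subst hv
      have hws : WhrStar (msub σ s) (σ x) := WhrStar_msub hw σ
      exact interp_saturated A I hI _ _ hws (hσ x A hx)
  | @lam Γ B C t d' ih =>
      intro I hI σ hσ s hs
      obtain ⟨v, hw, hips⟩ := factorize hs
      obtain ⟨s1, rfl, hs1⟩ := intparStar_lam_inv hips
      intro u hu
      have hbody : msub (scons u σ) s1 ∈ interp C I := by
        refine ih I hI (scons u σ) ?_ s1 hs1
        intro x B' hx
        cases x with
        | zero =>
            have : B' = B := by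
              simp only [Ctx.cons] at hx
              exact (Option.some_inj.1 hx).symm
            subst this
            exact hu
        | succ x => exact hσ x B' hx
      have hchain : WhrStar (Lam.app (msub σ s) u) (msub (scons u σ) s1) := by
        have h1 : WhrStar (Lam.app (msub σ s) u) (Lam.app (msub σ (Lam.lam s1)) u) :=
          WhrStar.app_congL u (WhrStar_msub hw σ)
        have h2 : Whr (Lam.app (msub σ (Lam.lam s1)) u) (msub (scons u σ) s1) := by
          show Whr (Lam.app (Lam.lam (msub (liftS σ) s1)) u) _
          rw [← subst_msub_lift σ s1 u]
          exact Whr.head _ _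
        exact h1.tail h2
      exact interp_saturated C I hI _ _ hchain hbody
  | @app Γ B C q r d1 d2 ih1 ih2 =>
      intro I hI σ hσ s hs
      obtain ⟨v, hw, hips⟩ := factorize hs
      obtain ⟨s1, s2, rfl, h1, h2⟩ := intparStar_app_inv hips
      have m1 := ih1 I hI σ hσ s1 h1
      have m2 := ih2 I hI σ hσ s2 h2
      have : Lam.app (msub σ s1) (msub σ s2) ∈ interp C I := m1 _ m2
      exact interp_saturated C I hI _ _ (WhrStar_msub hw σ) this
  | @allI Γ A t d' ih =>
      intro I hI σ hσ s hs
      show msub σ s ∈ interpC Saturated (Ty.all A) I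
      simp only [interpC, Set.mem_iInter]
      intro G hG
      have hcons : ∀ n, Saturated (Interp.cons G I n) := fun n => by
        cases n with
        | zero => exact hG
        | succ n => exact hI n
      refine ih (Interp.cons G I) hcons σ ?_ s hs
      intro x B' hx
      simp only [Ctx.liftTy] at hx
      cases hB : Γ x with
      | none => rw [hB] at hx; simp at hx
      | some B =>
          rw [hB] at hx
          simp only [Option.map_some] at hx
          have : B' = Ty.lift 0 B := (Option.some_inj.1 hx).symm
          subst this
          rw [interp_lift0]
          exact hσ x B hB
  | @allE Γ A t Y d' ih =>
      intro I hI σ hσ s hs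
      have := ih I hI σ hσ s hs
      simp only [interp, interpC, Set.mem_iInter] at this
      rw [interp_substT_var]
      exact this (I Y) (hI Y)

/-- The backward direction of the theorem. -/
theorem backward_dir {A : Ty} {t : Lam} (h : ∃ t', BetaStar t t' ∧ TyJ0 Ctx.empty t' A) :
    t ∈ Sem A := by
  obtain ⟨t', hred, hty⟩ := h
  intro I hI
  have := adequacyExp hty I hI Lam.var (by intro x B hx; simp [Ctx.empty] at hx) t hred
  rwa [msub_var] at this

end LC
/-! ### Part 7: typing metatheory for F0 -/

namespace LC
open Lam

def mapCtx (σ : ℕ → ℕ) (Γ : Ctx) : Ctx := fun x => (Γ x).map (renT σ)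

theorem liftTy_eq_mapCtx (Γ : Ctx) : Ctx.liftTy Γ = mapCtx Nat.succ Γ := by
  funext x
  simp only [Ctx.liftTy, mapCtx]
  congr 1
  funext t
  exact liftT0_eq_renT t

theorem mapCtx_comp (a b : ℕ → ℕ) (Γ : Ctx) :
    mapCtx a (mapCtx b Γ) = mapCtx (a ∘ b) Γ := by
  funext x
  simp only [mapCtx, Option.map_map]
  congr 1
  funext t
  exact renT_comp a b t

theorem mapCtx_congr {a b : ℕ → ℕ} (h : ∀ n, a n = b n) (Γ : Ctx) :
    mapCtx a Γ = mapCtx b Γ := by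
  have : a = b := funext h
  rw [this]

theorem mapCtx_id (Γ : Ctx) : mapCtx id Γ = Γ := by
  funext x
  simp only [mapCtx]
  cases Γ x with
  | none => rfl
  | some B => simp [renT_id]

theorem mapCtx_cons (σ : ℕ → ℕ) (B : Ty) (Γ : Ctx) :
    mapCtx σ (Ctx.cons B Γ) = Ctx.cons (renT σ B) (mapCtx σ Γ) := by
  funext x
  cases x <;> rfl

/-- height-indexed typing -/
inductive TyJH : ℕ → Ctx → Lam → Ty → Prop
  | var {n : ℕ} {Γ : Ctx} {x : ℕ} {A : Ty} : Γ x = some A → TyJH n Γ (Lam.var x) A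
  | lam {n : ℕ} {Γ : Ctx} {B C : Ty} {t : Lam} :
      TyJH n (Ctx.cons B Γ) t C → TyJH (n+1) Γ (Lam.lam t) (Ty.arr B C)
  | app {n : ℕ} {Γ : Ctx} {B C : Ty} {u v : Lam} :
      TyJH n Γ u (Ty.arr B C) → TyJH n Γ v B → TyJH (n+1) Γ (Lam.app u v) C
  | allI {n : ℕ} {Γ : Ctx} {A : Ty} {t : Lam} :
      TyJH n (Ctx.liftTy Γ) t A → TyJH (n+1) Γ t (Ty.all A)
  | allE {n : ℕ} {Γ : Ctx} {A : Ty} {t : Lam} (Y : ℕ) :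
      TyJH n Γ t (Ty.all A) → TyJH (n+1) Γ t (Ty.subst A 0 (Ty.var Y))

theorem TyJH_succ {n : ℕ} {Γ t A} (d : TyJH n Γ t A) : TyJH (n+1) Γ t A := by
  induction d with
  | var h => exact TyJH.var h
  | lam _ ih => exact TyJH.lam ih
  | app _ _ ih1 ih2 => exact TyJH.app ih1 ih2
  | allI _ ih => exact TyJH.allI ih
  | allE Y _ ih => exact TyJH.allE Y ih

theorem TyJH_mono {n m : ℕ} {Γ t A} (d : TyJH n Γ t A) (h : n ≤ m) : TyJH m Γ t A := by
  induction h with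
  | refl => exact d
  | step _ ih => exact TyJH_succ ih

theorem TyJH_to0 {n : ℕ} {Γ t A} (d : TyJH n Γ t A) : TyJ0 Γ t A := by
  induction d with
  | var h => exact TyJ0.var h
  | lam _ ih => exact TyJ0.lam ih
  | app _ _ ih1 ih2 => exact TyJ0.app ih1 ih2
  | allI _ ih => exact TyJ0.allI ih
  | allE Y _ ih => exact TyJ0.allE Y ih

theorem TyJ0_toH {Γ t A} (d : TyJ0 Γ t A) : ∃ n, TyJH n Γ t A := by
  induction d with
  | var h => exact ⟨0, TyJH.var h⟩
  | lam _ ih => obtain ⟨n, hn⟩ := ih; exact ⟨n+1, TyJH.lam hn⟩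
  | app _ _ ih1 ih2 =>
      obtain ⟨n1, h1⟩ := ih1
      obtain ⟨n2, h2⟩ := ih2
      exact ⟨max n1 n2 + 1,
        TyJH.app (TyJH_mono h1 (le_max_left _ _)) (TyJH_mono h2 (le_max_right _ _))⟩
  | allI _ ih => obtain ⟨n, hn⟩ := ih; exact ⟨n+1, TyJH.allI hn⟩
  | allE Y _ ih => obtain ⟨n, hn⟩ := ih; exact ⟨n+1, TyJH.allE Y hn⟩

/-- type-variable renaming acting on a typing derivation (height-preserving) -/
theorem TyJH_renT {n : ℕ} {Γ t A} (d : TyJH n Γ t A) :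
    ∀ σ : ℕ → ℕ, TyJH n (mapCtx σ Γ) t (renT σ A) := by
  induction d with
  | @var n Γ x A h =>
      intro σ
      refine TyJH.var ?_
      simp [mapCtx, h]
  | @lam n Γ B C t _ ih =>
      intro σ
      have h := ih σ
      rw [mapCtx_cons] at h
      exact TyJH.lam h
  | app _ _ ih1 ih2 =>
      intro σ
      exact TyJH.app (ih1 σ) (ih2 σ)
  | @allI n Γ A t _ ih =>
      intro σ
      have h := ih (liftR σ)
      rw [liftTy_eq_mapCtx, mapCtx_comp] at h
      rw [show (liftR σ ∘ Nat.succ) = (Nat.succ ∘ σ) from funext fun x => rfl] at h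
      rw [← mapCtx_comp, ← liftTy_eq_mapCtx] at h
      exact TyJH.allI h
  | @allE n Γ A t Y _ ih =>
      intro σ
      have h := TyJH.allE (σ Y) (ih σ)
      have heq : Ty.subst (renT (liftR σ) A) 0 (Ty.var (σ Y)) =
          renT σ (Ty.subst A 0 (Ty.var Y)) := by
        rw [substT_var_eq, substT_var_eq, renT_comp, renT_comp]
        apply renT_congr
        intro x _
        cases x with
        | zero => simp [Function.comp, liftR, sfunT]
        | succ x => simp [Function.comp, liftR, sfunT]
      rwa [heq] at h

theorem TyJ0_renT {Γ t A} (d : TyJ0 Γ t A) (σ : ℕ → ℕ) :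
    TyJ0 (mapCtx σ Γ) t (renT σ A) := by
  obtain ⟨n, hn⟩ := TyJ0_toH d
  exact TyJH_to0 (TyJH_renT hn σ)

/-- typing only depends on the context on free variables -/
theorem TyJ0_fv {Γ t A} (d : TyJ0 Γ t A) :
    ∀ Γ' : Ctx, (∀ x, FVp t x → Γ x = Γ' x) → TyJ0 Γ' t A := by
  induction d with
  | @var Γ x A h =>
      intro Γ' hagree
      exact TyJ0.var ((hagree x rfl) ▸ h)
  | @lam Γ B C t _ ih =>
      intro Γ' hagree
      refine TyJ0.lam (ih (Ctx.cons B Γ') fun x hx => ?_)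
      cases x with
      | zero => rfl
      | succ x => exact hagree x hx
  | app _ _ ih1 ih2 =>
      intro Γ' hagree
      exact TyJ0.app (ih1 Γ' fun x hx => hagree x (Or.inl hx))
        (ih2 Γ' fun x hx => hagree x (Or.inr hx))
  | @allI Γ A t _ ih =>
      intro Γ' hagree
      refine TyJ0.allI (ih (Ctx.liftTy Γ') fun x hx => ?_)
      simp only [Ctx.liftTy, hagree x hx]
  | allE Y _ ih =>
      intro Γ' hagree
      exact TyJ0.allE Y (ih Γ' hagree)

/-- term-variable renaming -/
theorem TyJ0_ren {Γ t A} (d : TyJ0 Γ t A) :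
    ∀ (r : ℕ → ℕ) (Γ' : Ctx), (∀ x, FVp t x → Γ' (r x) = Γ x) → TyJ0 Γ' (ren r t) A := by
  induction d with
  | @var Γ x A h =>
      intro r Γ' hagree
      exact TyJ0.var ((hagree x rfl).trans h)
  | @lam Γ B C t _ ih =>
      intro r Γ' hagree
      refine TyJ0.lam (ih (liftR r) (Ctx.cons B Γ') fun x hx => ?_)
      cases x with
      | zero => rfl
      | succ x => exact hagree x hx
  | app _ _ ih1 ih2 =>
      intro r Γ' hagree
      exact TyJ0.app (ih1 r Γ' fun x hx => hagree x (Or.inl hx))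
        (ih2 r Γ' fun x hx => hagree x (Or.inr hx))
  | @allI Γ A t _ ih =>
      intro r Γ' hagree
      refine TyJ0.allI (ih r (Ctx.liftTy Γ') fun x hx => ?_)
      simp only [Ctx.liftTy, hagree x hx]
  | allE Y _ ih =>
      intro r Γ' hagree
      exact TyJ0.allE Y (ih r Γ' hagree)

/-- computation: lifting a type variable -/
theorem liftT_var0 (Y : ℕ) : Ty.lift 0 (Ty.var Y) = Ty.var (Y+1) := by
  simp [Ty.lift]

/-- inversion of ∀ for λ-abstractions -/
theorem inv_all_lam : ∀ n : ℕ, ∀ {Γ : Ctx} {q : Lam} {T : Ty},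
    TyJH n Γ (Lam.lam q) T → ∀ A₀ : Ty, T = Ty.all A₀ →
    ∃ m, m < n ∧ TyJH m (Ctx.liftTy Γ) (Lam.lam q) A₀ := by
  intro n
  induction n using Nat.strong_induction_on with
  | _ n ih =>
      intro Γ q T d A₀ hT
      cases d with
      | lam d' => exact absurd hT (by simp)
      | allI d' =>
          cases hT
          exact ⟨_, Nat.lt_succ_self _, d'⟩
      | @allE k _ A _ Y d' =>
          cases A with
          | var m =>
              exfalso
              revert hT
              simp only [Ty.subst]
              split <;> (try split) <;> simp
          | arr a b => exact absurd hT (by simp [Ty.subst])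
          | all A₂ =>
              have hA₀ : A₀ = Ty.subst A₂ 1 (Ty.var (Y+1)) := by
                simp only [Ty.subst, liftT_var0] at hT
                exact (Ty.all.inj hT).symm
              obtain ⟨m₁, hm₁, h₁⟩ := ih k (Nat.lt_succ_self k) d' (Ty.all A₂) rfl
              obtain ⟨m₂, hm₂, h₂⟩ := ih m₁ (by omega) h₁ A₂ rfl
              have h₃ := TyJH_renT h₂ (sfunT 1 (Y+1))
              rw [liftTy_eq_mapCtx, liftTy_eq_mapCtx, mapCtx_comp, mapCtx_comp] at h₃
              rw [mapCtx_congr (b := Nat.succ) (fun x => by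
                simp [Function.comp, sfunT]) Γ] at h₃
              rw [← liftTy_eq_mapCtx] at h₃
              exact ⟨m₂, by omega, by rw [hA₀, substT_var_eq]; exact h₃⟩

/-- inversion for λ-abstractions at arrow types -/
theorem inv_lam : ∀ n : ℕ, ∀ {Γ : Ctx} {q : Lam} {T : Ty},
    TyJH n Γ (Lam.lam q) T → ∀ D C : Ty, T = Ty.arr D C →
    TyJ0 (Ctx.cons D Γ) q C := by
  intro n
  induction n using Nat.strong_induction_on with
  | _ n ih =>
      intro Γ q T d D C hT
      cases d with
      | lam d' =>
          obtain ⟨rfl, rfl⟩ : _ ∧ _ := by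
            constructor
            · exact (Ty.arr.inj hT).1
            · exact (Ty.arr.inj hT).2
          exact TyJH_to0 d'
      | allI d' => exact absurd hT (by simp)
      | @allE k _ A _ Y d' =>
          cases A with
          | var m =>
              exfalso
              revert hT
              simp only [Ty.subst]
              split <;> (try split) <;> simp
          | all A₂ => exact absurd hT (by simp [Ty.subst])
          | arr D₁ C₁ =>
              have hD : D = Ty.subst D₁ 0 (Ty.var Y) := by
                simp only [Ty.subst] at hT
                exact ((Ty.arr.inj hT).1).symm
              have hC : C = Ty.subst C₁ 0 (Ty.var Y) := by
                simp only [Ty.subst] at hT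
                exact ((Ty.arr.inj hT).2).symm
              obtain ⟨m₁, hm₁, h₁⟩ := inv_all_lam k d' (Ty.arr D₁ C₁) rfl
              have h₂ := ih m₁ (by omega) h₁ D₁ C₁ rfl
              have h₃ := TyJ0_renT h₂ (sfunT 0 Y)
              rw [mapCtx_cons, liftTy_eq_mapCtx, mapCtx_comp] at h₃
              rw [mapCtx_congr (b := id) (fun x => by
                simp [Function.comp, sfunT]) Γ, mapCtx_id] at h₃
              rw [hD, hC, substT_var_eq, substT_var_eq]
              exact h₃

theorem inv_lam0 {Γ : Ctx} {q : Lam} {D C : Ty} (d : TyJ0 Γ (Lam.lam q) (Ty.arr D C)) :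
    TyJ0 (Ctx.cons D Γ) q C := by
  obtain ⟨n, hn⟩ := TyJ0_toH d
  exact inv_lam n hn D C rfl

/-- simultaneous typed substitution -/
theorem TyJ0_msub {Γ : Ctx} {q : Lam} {C : Ty} (d : TyJ0 Γ q C) :
    ∀ (Δ : Ctx) (σ : ℕ → Lam), (∀ x B, Γ x = some B → TyJ0 Δ (σ x) B) →
    TyJ0 Δ (msub σ q) C := by
  induction d with
  | @var Γ x A h =>
      intro Δ σ hσ
      exact hσ x A h
  | @lam Γ B C t _ ih =>
      intro Δ σ hσ
      refine TyJ0.lam (ih (Ctx.cons B Δ) (liftS σ) ?_)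
      intro x B' hx
      cases x with
      | zero =>
          have : B' = B := by
            simp only [Ctx.cons] at hx
            exact (Option.some_inj.1 hx).symm
          subst this
          exact TyJ0.var rfl
      | succ x =>
          have h0 := hσ x B' hx
          show TyJ0 (Ctx.cons B Δ) (ren Nat.succ (σ x)) B'
          exact TyJ0_ren h0 Nat.succ (Ctx.cons B Δ) (fun y _ => rfl)
  | app _ _ ih1 ih2 =>
      intro Δ σ hσ
      exact TyJ0.app (ih1 Δ σ hσ) (ih2 Δ σ hσ)
  | @allI Γ A t _ ih =>
      intro Δ σ hσ
      refine TyJ0.allI (ih (Ctx.liftTy Δ) σ ?_)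
      intro x B' hx
      simp only [Ctx.liftTy] at hx
      cases hB : Γ x with
      | none => rw [hB] at hx; simp at hx
      | some B =>
          rw [hB] at hx
          simp only [Option.map_some] at hx
          have : B' = Ty.lift 0 B := (Option.some_inj.1 hx).symm
          subst this
          have := TyJ0_renT (hσ x B hB) Nat.succ
          rw [← liftTy_eq_mapCtx, ← liftT0_eq_renT] at this
          exact this
  | allE Y _ ih =>
      intro Δ σ hσ
      exact TyJ0.allE Y (ih Δ σ hσ)

theorem TyJ0_subst0 {Γ : Ctx} {q v : Lam} {D C : Ty}
    (dq : TyJ0 (Ctx.cons D Γ) q C) (dv : TyJ0 Γ v D) :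
    TyJ0 Γ (Lam.subst q 0 v) C := by
  rw [subst0_eq_msub]
  refine TyJ0_msub dq Γ (scons v Lam.var) ?_
  intro x B hx
  cases x with
  | zero =>
      have : B = D := by
        simp only [Ctx.cons] at hx
        exact (Option.some_inj.1 hx).symm
      subst this
      exact dv
  | succ x => exact TyJ0.var hx

/-- Subject reduction for F0 -/
theorem TyJ0_beta {Γ : Ctx} {a : Lam} {C : Ty} (d : TyJ0 Γ a C) :
    ∀ a', Beta a a' → TyJ0 Γ a' C := by
  induction d with
  | var h => intro a' ha'; cases ha'
  | @lam Γ B C t d' ih =>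
      intro a' ha'
      cases ha' with
      | lam hb => exact TyJ0.lam (ih _ hb)
  | @app Γ B C u v d1 d2 ih1 ih2 =>
      intro a' ha'
      cases ha' with
      | beta q _ => exact TyJ0_subst0 (inv_lam0 d1) d2
      | appL _ hb => exact TyJ0.app (ih1 _ hb) d2
      | appR _ hb => exact TyJ0.app d1 (ih2 _ hb)
  | allI _ ih =>
      intro a' ha'
      exact TyJ0.allI (ih _ ha')
  | allE Y _ ih =>
      intro a' ha'
      exact TyJ0.allE Y (ih _ ha')

theorem TyJ0_betaStar {Γ : Ctx} {a a' : Lam} {C : Ty} (d : TyJ0 Γ a C)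
    (h : BetaStar a a') : TyJ0 Γ a' C := by
  induction h with
  | refl => exact d
  | tail _ hstep ih => exact TyJ0_beta ih _ hstep

end LC
/-! ### Part 8: neutral spine typing inversion -/

namespace LC
open Lam

/-- tower of vacuous ∀-closures -/
inductive TowerMem : Ty → Ty → Prop
  | zero (S : Ty) : TowerMem S S
  | succ {S T : Ty} : TowerMem S T → TowerMem S (Ty.all (Ty.lift 0 T))

theorem tower_not_all {S C : Ty} (h : TowerMem S C) (hC : ∀ T, C ≠ Ty.all T) : C = S := by
  cases h with
  | zero => rfl
  | succ h' => exact absurd rfl (hC _)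

theorem tower_posty {S C : Ty} (h : TowerMem S C) (hC : PosTy C) : C = S := by
  cases h with
  | zero => rfl
  | @succ T h' =>
      obtain ⟨_, h0⟩ := PosTy_all_inv hC
      rw [mem_tfv_iff] at h0
      exact absurd h0 (not_FTp_lift0 T)

theorem tower_all_inv {S A : Ty} (h : TowerMem S (Ty.all A)) (hS : NegTy S) :
    ∃ T, A = Ty.lift 0 T ∧ TowerMem S T := by
  cases h with
  | zero => exact absurd hS (not_negTy_all A)
  | @succ T h' => exact ⟨T, rfl, h'⟩

theorem tower_lift_no0 {S T : Ty} (h : TowerMem (Ty.lift 0 S) T) : ¬ FTp T 0 := by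
  induction h with
  | zero => exact not_FTp_lift0 S
  | @succ T' h' ih =>
      show ¬ FTp (Ty.lift 0 T') (0 + 1)
      rw [liftT0_eq_renT, FTp_renT]
      rintro ⟨y, hy, hy1⟩
      have : y = 0 := by omega
      subst this
      exact ih hy

theorem lift1_eq_lift0 {T : Ty} (h : ¬ FTp T 0) : Ty.lift 1 T = Ty.lift 0 T := by
  rw [liftT_eq_renT, liftT_eq_renT]
  apply renT_congr
  intro x hx
  cases x with
  | zero => exact absurd hx h
  | succ x => simp [shiftAt]

theorem tower_lift {S C : Ty} (h : TowerMem (Ty.lift 0 S) C) : TowerMem S (Ty.all C) := by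
  induction h with
  | zero => exact TowerMem.succ (TowerMem.zero S)
  | @succ T h' ih =>
      have := TowerMem.succ ih
      rw [show Ty.lift 0 (Ty.all T) = Ty.all (Ty.lift 1 T) from rfl] at this
      rwa [lift1_eq_lift0 (tower_lift_no0 h')] at this

/-- contexts of ∀⁻ types -/
def NegC (Δ : Ctx) : Prop := ∀ x B, Δ x = some B → NegTy B

theorem NegC_liftTy {Δ : Ctx} (h : NegC Δ) : NegC (Ctx.liftTy Δ) := by
  intro x B hx
  simp only [Ctx.liftTy] at hx
  cases hB : Δ x with
  | none => rw [hB] at hx; simp at hx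
  | some B0 =>
      rw [hB] at hx
      simp only [Option.map_some] at hx
      have : B = Ty.lift 0 B0 := (Option.some_inj.1 hx).symm
      subst this
      exact NegTy_lift0 (h x B0 hB)

/-- spine typing of neutral terms -/
inductive NeutTy : Ctx → Lam → Ty → Prop
  | var {Δ : Ctx} {x : ℕ} {S : Ty} : Δ x = some S → NeutTy Δ (Lam.var x) S
  | app {Δ : Ctx} {n₁ v : Lam} {D S : Ty} :
      NeutTy Δ n₁ (Ty.arr D S) → TyJ0 Δ n₁ (Ty.arr D S) → TyJ0 Δ v D →
      NeutTy Δ (Lam.app n₁ v) S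

theorem NeutTy_neg {Δ : Ctx} {n : Lam} {S : Ty} (hΔ : NegC Δ) (h : NeutTy Δ n S) :
    NegTy S := by
  induction h with
  | var hx => exact hΔ _ _ hx
  | app h1 _ _ ih => exact (NegTy_arr_inv ih).2

theorem renT_pred_lift (X : Ty) : renT Nat.pred (Ty.lift 0 X) = X := by
  rw [liftT0_eq_renT, renT_comp]
  rw [show renT (Nat.pred ∘ Nat.succ) X = renT id X from renT_congr X (fun x _ => rfl),
    renT_id]

theorem TyJ0_unlift {Δ : Ctx} {t : Lam} {X : Ty}
    (d : TyJ0 (Ctx.liftTy Δ) t (Ty.lift 0 X)) : TyJ0 Δ t X := by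
  have := TyJ0_renT d Nat.pred
  rw [renT_pred_lift, liftTy_eq_mapCtx, mapCtx_comp] at this
  rw [show mapCtx (Nat.pred ∘ Nat.succ) Δ = mapCtx id Δ from mapCtx_congr (fun x => rfl) Δ,
    mapCtx_id] at this
  exact this

theorem NeutTy_unlift {Δ : Ctx} {n : Lam} {S₁ : Ty}
    (h : NeutTy (Ctx.liftTy Δ) n S₁) : ∃ S₀, S₁ = Ty.lift 0 S₀ ∧ NeutTy Δ n S₀ := by
  induction h with
  | @var x S hx =>
      simp only [Ctx.liftTy] at hx
      cases hB : Δ x with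
      | none => rw [hB] at hx; simp at hx
      | some S0 =>
          rw [hB] at hx
          simp only [Option.map_some] at hx
          exact ⟨S0, (Option.some_inj.1 hx).symm, NeutTy.var hB⟩
  | @app n₁ v D S h1 ht1 ht2 ih =>
      obtain ⟨S0', heq, hn⟩ := ih
      cases S0' with
      | var m => exact absurd heq (by simp [Ty.lift])
      | all a => exact absurd heq (by simp [Ty.lift])
      | arr D₀ S₀ =>
          have hD : D = Ty.lift 0 D₀ := by
            simp only [Ty.lift] at heq
            exact (Ty.arr.inj heq).1
          have hS : S = Ty.lift 0 S₀ := by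
            simp only [Ty.lift] at heq
            exact (Ty.arr.inj heq).2
          subst hD hS
          have ha : TyJ0 Δ n₁ (Ty.arr D₀ S₀) := by
            refine TyJ0_unlift (X := Ty.arr D₀ S₀) ?_
            rwa [show Ty.lift 0 (Ty.arr D₀ S₀) =
              Ty.arr (Ty.lift 0 D₀) (Ty.lift 0 S₀) from rfl]
          exact ⟨S₀, rfl, NeutTy.app hn ha (TyJ0_unlift ht2)⟩

/-- main inversion for neutral terms in ∀⁻ contexts -/
theorem neut_main : ∀ n : ℕ, ∀ {Δ : Ctx} {t : Lam} {C : Ty},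
    TyJH n Δ t C → NegC Δ → NN t → ∃ S, TowerMem S C ∧ NeutTy Δ t S := by
  intro n
  induction n using Nat.strong_induction_on with
  | _ n ih =>
      intro Δ t C d hΔ hNN
      cases d with
      | var hx => exact ⟨C, TowerMem.zero C, NeutTy.var hx⟩
      | lam d' => cases hNN
      | @app k _ B C u v d1 d2 =>
          cases hNN with
          | app _ hNN1 =>
              obtain ⟨S₁, tw, nt⟩ := ih k (Nat.lt_succ_self k) d1 hΔ hNN1
              have harr : Ty.arr B C = S₁ := tower_not_all tw (by simp)
              subst harr
              exact ⟨C, TowerMem.zero C,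
                NeutTy.app nt (TyJH_to0 d1) (TyJH_to0 d2)⟩
      | @allI k _ A _ d' =>
          obtain ⟨S₁, tw, nt⟩ := ih k (Nat.lt_succ_self k) d' (NegC_liftTy hΔ) hNN
          obtain ⟨S₀, rfl, nt'⟩ := NeutTy_unlift nt
          exact ⟨S₀, tower_lift tw, nt'⟩
      | @allE k _ A _ Y d' =>
          obtain ⟨S, tw, nt⟩ := ih k (Nat.lt_succ_self k) d' hΔ hNN
          obtain ⟨T, rfl, tw'⟩ := tower_all_inv tw (NeutTy_neg hΔ nt)
          rw [substT_lift0]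
          exact ⟨S, tw', nt⟩

end LC
/-! ### Part 9: normalization via the Girard sandwich -/

namespace LC
open Lam

/-- terms reducing to a neutral normal form -/
def Ne : Set Lam := {t | ∃ u, BetaStar t u ∧ NN u ∧ Normal u}

theorem Ne_sat : Saturated Ne := by
  intro t u htu ⟨w, hw, hnn, hnorm⟩
  exact ⟨w, (WhrStar_betaStar htu).trans hw, hnn, hnorm⟩

theorem var_mem_Ne (x : ℕ) : Lam.var x ∈ Ne :=
  ⟨Lam.var x, Relation.ReflTransGen.refl, NN.var x, normal_var x⟩

/-- the constant-Ne interpretation -/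
def Jne : Interp := fun _ => Ne

theorem Jne_sat : ∀ n, Saturated (Jne n) := fun _ => Ne_sat

theorem cons_Ne_eq : Interp.cons Ne Jne = Jne := by
  funext n
  cases n <;> rfl

/-- cons for renamings -/
def rcons (x : ℕ) (r : ℕ → ℕ) : ℕ → ℕ
  | 0 => x
  | n + 1 => r n

theorem subst_var0_ren (t : Lam) (x : ℕ) :
    Lam.subst t 0 (Lam.var x) = ren (rcons x id) t := by
  rw [subst0_eq_msub, ren_eq_msub]
  apply msub_congr
  intro y _
  cases y <;> rfl

def sizeT : Ty → ℕ
  | .var _ => 1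
  | .arr a b => sizeT a + sizeT b + 1
  | .all a => sizeT a + 1

/-- sandwich: Ne ⊆ |C| for ∀⁻ C, and |C| ⊆ WN for ∀⁺ C, over the Ne-interpretation -/
theorem sandwich : ∀ k : ℕ, ∀ C : Ty, sizeT C ≤ k →
    (NegTy C → Ne ⊆ interp C Jne) ∧
    (PosTy C → interp C Jne ⊆ {t | Normalizable t}) := by
  intro k
  induction k using Nat.strong_induction_on with
  | _ k ih =>
      intro C hk
      cases C with
      | var n =>
          refine ⟨fun _ => le_refl _, fun _ t ht => ?_⟩
          obtain ⟨u, hu, _, hnorm⟩ := ht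
          exact ⟨u, hu, hnorm⟩
      | arr D E =>
          have hD : sizeT D ≤ sizeT D := le_refl _
          have hkD : sizeT D < k := by simp [sizeT] at hk; omega
          have hkE : sizeT E < k := by simp [sizeT] at hk; omega
          constructor
          · intro hC t ht
            obtain ⟨hPosD, hNegE⟩ := NegTy_arr_inv hC
            intro v hv
            have hvWN : Normalizable v := (ih _ hkD D (le_refl _)).2 hPosD hv
            obtain ⟨v₀, hv₀, hv₀n⟩ := hvWN
            obtain ⟨u, hu, hnn, hnorm⟩ := ht
            have : Lam.app t v ∈ Ne := by
              refine ⟨Lam.app u v₀, BetaStar.app_cong hu hv₀, NN.app v₀ hnn, ?_⟩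
              exact normal_app_intro hnorm hv₀n (NN_not_lam hnn)
            exact (ih _ hkE E (le_refl _)).1 hNegE this
          · intro hC t ht
            obtain ⟨hNegD, hPosE⟩ := PosTy_arr_inv hC
            have h0 : Lam.var 0 ∈ interp D Jne :=
              (ih _ hkD D (le_refl _)).1 hNegD (var_mem_Ne 0)
            have hE : Lam.app t (Lam.var 0) ∈ interp E Jne := ht _ h0
            obtain ⟨w, hred, hnorm⟩ := (ih _ hkE E (le_refl _)).2 hPosE hE
            rcases app_dec hred with ⟨w1, w2, rfl, hw1, _⟩ | ⟨u1, hu1, hsub⟩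
            · exact ⟨w1, hw1, (normal_app_elim hnorm).1⟩
            · rw [subst_var0_ren] at hsub
              obtain ⟨w₀, hw₀, rfl⟩ := BetaStar_ren_reflect hsub
              refine ⟨Lam.lam w₀, ?_, ?_⟩
              · exact (WhrStar_betaStar hu1).trans (BetaStar.lam_cong hw₀)
              · exact normal_lam_iff.2 (normal_ren_reflect hnorm)
      | all A =>
          refine ⟨fun hC => absurd hC (not_negTy_all A), fun hC t ht => ?_⟩
          obtain ⟨hPosA, _⟩ := PosTy_all_inv hC
          have hkA : sizeT A < k := by simp [sizeT] at hk; omega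
          have : t ∈ interp A (Interp.cons Ne Jne) := by
            rw [interp_all] at ht
            simp only [Set.mem_iInter] at ht
            exact ht Ne Ne_sat
          rw [cons_Ne_eq] at this
          exact (ih _ hkA A (le_refl _)).2 hPosA this

/-- any term typable in a ∀⁻ context is in the Ne-interpretation of its type -/
theorem typed_interp_Jne {Δ : Ctx} {a : Lam} {C : Ty} (hΔ : NegC Δ)
    (d : TyJ0 Δ a C) : a ∈ interp C Jne := by
  have := adequacyExp d Jne Jne_sat Lam.var ?_ a Relation.ReflTransGen.refl
  · rwa [msub_var] at this
  · intro x B hx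
    exact (sandwich (sizeT B) B (le_refl _)).1 (hΔ x B hx) (var_mem_Ne x)

/-- a term typable at a variable type in a ∀⁻ context has a neutral normal reduct -/
theorem typed_var_upgrade {Δ : Ctx} {a : Lam} {n : ℕ} (hΔ : NegC Δ)
    (d : TyJ0 Δ a (Ty.var n)) :
    ∃ a₀, BetaStar a a₀ ∧ NN a₀ ∧ Normal a₀ ∧ TyJ0 Δ a₀ (Ty.var n) := by
  have := typed_interp_Jne hΔ d
  obtain ⟨a₀, h1, h2, h3⟩ := this
  exact ⟨a₀, h1, h2, h3, TyJ0_betaStar d h1⟩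

end LC
/-! ### Part 10: enumeration of ∀⁻ types and the canonical context -/

namespace LC
open Lam

/-- a surjective enumeration of all types -/
def dec (n : ℕ) : Ty :=
  if h0 : n % 3 = 0 then .var (n / 3)
  else if h1 : n % 3 = 1 then
    .arr (dec ((Nat.unpair (n / 3)).1)) (dec ((Nat.unpair (n / 3)).2))
  else .all (dec (n / 3))
  termination_by n
  decreasing_by
  · have h2 := Nat.unpair_left_le (n / 3)
    have h3 : n % 3 ≠ 0 := h0
    omega
  · have h2 := Nat.unpair_right_le (n / 3)
    have h3 : n % 3 ≠ 0 := h0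
    omega
  · have h3 : n % 3 ≠ 0 := h0
    omega

theorem dec_surj (B : Ty) : ∃ c, dec c = B := by
  induction B with
  | var k =>
      refine ⟨3 * k, ?_⟩
      rw [dec]
      simp [Nat.mul_mod_right, Nat.mul_div_cancel_left k (by norm_num : (0:ℕ) < 3)]
  | arr a b iha ihb =>
      obtain ⟨ca, ha⟩ := iha
      obtain ⟨cb, hb⟩ := ihb
      refine ⟨3 * (Nat.pair ca cb) + 1, ?_⟩
      rw [dec]
      have h0 : (3 * (Nat.pair ca cb) + 1) % 3 = 1 := by omega
      have h1 : (3 * (Nat.pair ca cb) + 1) / 3 = Nat.pair ca cb := by omega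
      simp [h0, h1, Nat.unpair_pair, ha, hb]
  | all a ih =>
      obtain ⟨ca, ha⟩ := ih
      refine ⟨3 * ca + 2, ?_⟩
      rw [dec]
      have h0 : (3 * ca + 2) % 3 = 2 := by omega
      have h1 : (3 * ca + 2) / 3 = ca := by omega
      simp [h0, h1, ha]

/- repair functions onto ∀⁺ / ∀⁻ types -/
mutual
  def posify : Ty → Ty
    | .var n => .var n
    | .arr a b => .arr (negify a) (posify b)
    | .all a => if 0 ∈ (posify a).fv then .all (posify a) else .var 0
  def negify : Ty → Ty
    | .var n => .var n
    | .arr a b => .arr (posify a) (negify b)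
    | .all _ => .var 0
end

mutual
  theorem posify_pos : ∀ T, PosTy (posify T)
    | .var n => PosTy.var n
    | .arr a b => PosTy.arr (negify_neg a) (posify_pos b)
    | .all a => by
        rw [posify]
        split
        · next h => exact PosTy.all (posify_pos a) h
        · exact PosTy.var 0
  theorem negify_neg : ∀ T, NegTy (negify T)
    | .var n => NegTy.var n
    | .arr a b => NegTy.arr (posify_pos a) (negify_neg b)
    | .all _ => NegTy.var 0
end

mutual
  theorem posify_eq : ∀ {T}, PosTy T → posify T = T
    | .var n, _ => rfl
    | .arr a b, h => by
        obtain ⟨h1, h2⟩ := PosTy_arr_inv h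
        rw [posify, negify_eq h1, posify_eq h2]
    | .all a, h => by
        obtain ⟨h1, h2⟩ := PosTy_all_inv h
        rw [posify]
        rw [posify_eq h1]
        simp [h2]
  theorem negify_eq : ∀ {T}, NegTy T → negify T = T
    | .var n, _ => rfl
    | .arr a b, h => by
        obtain ⟨h1, h2⟩ := NegTy_arr_inv h
        rw [negify, posify_eq h1, negify_eq h2]
    | .all a, h => absurd h (not_negTy_all a)
end

/-- the canonical context: every ∀⁻ type occurs at infinitely many variables -/
def GammaI : Ctx := fun x => some (negify (dec ((Nat.unpair x).2)))

theorem GammaI_neg : NegC GammaI := by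
  intro x B hx
  have : B = negify (dec ((Nat.unpair x).2)) := (Option.some_inj.1 hx).symm
  subst this
  exact negify_neg _

theorem exists_fresh_var (B : Ty) (hB : NegTy B) (S : Finset ℕ) :
    ∃ x, x ∉ S ∧ GammaI x = some B := by
  obtain ⟨c, hc⟩ := dec_surj B
  refine ⟨Nat.pair (S.sup id + 1) c, ?_, ?_⟩
  · intro hmem
    have h1 : id (Nat.pair (S.sup id + 1) c) ≤ S.sup id := Finset.le_sup hmem
    have h2 : S.sup id + 1 ≤ Nat.pair (S.sup id + 1) c := Nat.left_le_pair _ _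
    simp only [id] at h1
    omega
  · simp only [GammaI, Nat.unpair_pair, hc, negify_eq hB]

theorem exists_fresh_nat (S : Finset ℕ) : ∃ m, m ∉ S := by
  refine ⟨S.sup id + 1, fun hmem => ?_⟩
  have h1 : id (S.sup id + 1) ≤ S.sup id := Finset.le_sup hmem
  simp only [id] at h1
  omega

/-- freshness with respect to a fixed term -/
def Fresh (t0 w : Lam) : Prop := ∀ y, FVp w y → ¬ FVp t0 y

/-- the tailored interpretation -/
def I0 (t0 : Lam) : Interp := fun n =>
  {u | ∃ u', BetaStar u u' ∧ Normal u' ∧ TyJ0 GammaI u' (Ty.var n) ∧ Fresh t0 u'}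

theorem I0_sat (t0 : Lam) : ∀ n, Saturated (I0 t0 n) := by
  intro n t u htu ⟨u', h1, h2, h3, h4⟩
  exact ⟨u', (WhrStar_betaStar htu).trans h1, h2, h3, h4⟩

end LC
/-! ### Part 11: the completeness lemma and main theorem -/

namespace LC
open Lam

def gty (x : ℕ) : Ty := negify (dec ((Nat.unpair x).2))

theorem GammaI_eq (x : ℕ) : GammaI x = some (gty x) := rfl

/-- Main mutual lemma (P and N). -/
theorem PN (t0 : Lam) : ∀ k : ℕ, ∀ A : Ty, sizeT A ≤ k →
    (PosTy A → ∀ (ρ : ℕ → ℕ) (u : Lam), u ∈ interp A (fun n => I0 t0 (ρ n)) →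
      ∃ u', BetaStar u u' ∧ Normal u' ∧ TyJ0 GammaI u' (renT ρ A) ∧ Fresh t0 u') ∧
    (NegTy A → ∀ (ρ : ℕ → ℕ) (u u' : Lam), BetaStar u u' → TyJ0 GammaI u' (renT ρ A) →
      Fresh t0 u' → u ∈ interp A (fun n => I0 t0 (ρ n))) := by
  intro k
  induction k using Nat.strong_induction_on with
  | _ k ih =>
      intro A hk
      cases A with
      | var n =>
          constructor
          · intro _ ρ u hu
            obtain ⟨u', h1, h2, h3, h4⟩ := hu
            exact ⟨u', h1, h2, h3, h4⟩
          · intro _ ρ u u' hred hty hfresh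
            obtain ⟨a₀, h1, _, h3, h4⟩ := typed_var_upgrade GammaI_neg hty
            refine ⟨a₀, hred.trans h1, h3, h4, ?_⟩
            intro y hy
            exact hfresh y (FVp_betastar h1 hy)
      | arr B A' =>
          have hkB : sizeT B < k := by simp [sizeT] at hk; omega
          have hkA' : sizeT A' < k := by simp [sizeT] at hk; omega
          constructor
          · -- P
            intro hA ρ u hu
            obtain ⟨hNegB, hPosA'⟩ := PosTy_arr_inv hA
            obtain ⟨x, hxS, hxG⟩ := exists_fresh_var (renT ρ B) (NegTy_renT hNegB ρ)
              (Lam.fv u ∪ Lam.fv t0)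
            have hx_u : ¬ FVp u x := fun h =>
              hxS (Finset.mem_union_left _ ((mem_fv_iff u x).2 h))
            have hx_t0 : ¬ FVp t0 x := fun h =>
              hxS (Finset.mem_union_right _ ((mem_fv_iff t0 x).2 h))
            have hvx : Lam.var x ∈ interp B (fun n => I0 t0 (ρ n)) := by
              refine (ih _ hkB B (le_refl _)).2 hNegB ρ (Lam.var x) (Lam.var x)
                Relation.ReflTransGen.refl (TyJ0.var hxG) ?_
              intro y hy
              have hxy : x = y := hy
              subst hxy
              exact hx_t0
            have hApp := hu (Lam.var x) hvx
            obtain ⟨w, hw, hwnorm, hwty, hwfresh⟩ :=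
              (ih _ hkA' A' (le_refl _)).1 hPosA' ρ _ hApp
            rcases app_dec hw with ⟨w1, w2, rfl, hw1, hw2⟩ | ⟨u1, hu1, hsub⟩
            · -- neutral case
              have hw2x : w2 = Lam.var x := betastar_var hw2
              subst hw2x
              obtain ⟨hnw1, hnw2, hnotlam⟩ := normal_app_elim hwnorm
              have hNN1 : NN w1 := by
                rcases normal_shape hnw1 with ⟨q, rfl, _⟩ | h
                · exact absurd rfl (hnotlam q)
                · exact h
              obtain ⟨nH, hH⟩ := TyJ0_toH hwty
              obtain ⟨Sp, tw, nt⟩ := neut_main nH hH GammaI_neg (NN.app _ hNN1)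
              have hcases : (∃ A₂, A' = Ty.all A₂) ∨ (∀ T, renT ρ A' ≠ Ty.all T) := by
                cases A' with
                | var m => exact Or.inr (by simp [renT])
                | arr a b => exact Or.inr (by simp [renT])
                | all a => exact Or.inl ⟨a, rfl⟩
              rcases hcases with ⟨A₂, rfl⟩ | hnotall
              · exfalso
                obtain ⟨hP2, h02⟩ := PosTy_all_inv hPosA'
                have tw' : TowerMem Sp (Ty.all (renT (liftR ρ) A₂)) := tw
                obtain ⟨T, hT, _⟩ := tower_all_inv tw' (NeutTy_neg GammaI_neg nt)
                have h0' : FTp (renT (liftR ρ) A₂) 0 :=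
                  FTp_renT.2 ⟨0, (mem_tfv_iff _ _).1 h02, rfl⟩
                rw [hT] at h0'
                exact not_FTp_lift0 T h0'
              · have hSp : renT ρ A' = Sp := tower_not_all tw hnotall
                cases nt with
                | @app _ _ D _ nt1 hty1 hty2 =>
                    have hPosD : PosTy D := (NegTy_arr_inv (NeutTy_neg GammaI_neg nt1)).1
                    obtain ⟨nH2, hH2⟩ := TyJ0_toH hty2
                    obtain ⟨Sx, twx, ntx⟩ := neut_main nH2 hH2 GammaI_neg (NN.var x)
                    have hSx : Sx = renT ρ B := by
                      cases ntx with
                      | var hxG' =>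
                          rw [hxG] at hxG'
                          exact (Option.some_inj.1 hxG').symm
                    subst hSx
                    have hD : D = renT ρ B := tower_posty twx hPosD
                    subst hD
                    rw [← hSp] at hty1
                    refine ⟨w1, hw1, hnw1, hty1, ?_⟩
                    intro y hy
                    exact hwfresh y (Or.inl hy)
            · -- abstraction case
              rw [subst_var0_ren] at hsub
              obtain ⟨w0, hw0, rfl⟩ := BetaStar_ren_reflect hsub
              have hx1 : ¬ FVp w0 (x+1) := by
                intro h
                have h2 : FVp u1 (x+1) := FVp_betastar hw0 h
                have h3 : FVp (Lam.lam u1) x := h2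
                exact hx_u (FVp_betastar (WhrStar_betaStar hu1) h3)
              have hty0 : TyJ0 (Ctx.cons (renT ρ B) GammaI) w0 (renT ρ A') := by
                have hren := TyJ0_ren hwty (fun y => if y = x then 0 else y + 1)
                  (Ctx.cons (renT ρ B) GammaI) ?_
                · have hrew : ren (fun y => if y = x then 0 else y + 1)
                      (ren (rcons x id) w0) = w0 := by
                    rw [ren_comp]
                    rw [ren_congr w0 (r' := id) ?_, ren_id]
                    intro y hy
                    cases y with
                    | zero => simp [Function.comp, rcons]
                    | succ y =>
                        simp only [Function.comp, rcons, id]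
                        have : ¬ (y = x) := by
                          intro hxy
                          subst hxy
                          exact hx1 hy
                        simp [this]
                  rwa [hrew] at hren
                · intro y hy
                  by_cases hyx : y = x
                  · subst hyx
                    simp only [if_pos rfl]
                    show some (renT ρ B) = GammaI y
                    rw [hxG]
                  · simp only [if_neg hyx]
                    rfl
              refine ⟨Lam.lam w0, ?_, ?_, TyJ0.lam hty0, ?_⟩
              · exact (WhrStar_betaStar hu1).trans (BetaStar.lam_cong hw0)
              · exact normal_lam_iff.2 (normal_ren_reflect hwnorm)
              · intro y hy
                refine hwfresh y ?_
                exact FVp_ren.2 ⟨y + 1, hy, rfl⟩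
          · -- N
            intro hA ρ u u' hred hty hfresh
            obtain ⟨hPosB, hNegA'⟩ := NegTy_arr_inv hA
            intro v hv
            obtain ⟨v', hv1, hv2, hv3, hv4⟩ := (ih _ hkB B (le_refl _)).1 hPosB ρ v hv
            have happ : TyJ0 GammaI (Lam.app u' v') (renT ρ A') := TyJ0.app hty hv3
            refine (ih _ hkA' A' (le_refl _)).2 hNegA' ρ (Lam.app u v) (Lam.app u' v')
              (BetaStar.app_cong hred hv1) happ ?_
            intro y hy
            rcases hy with hy | hy
            · exact hfresh y hy
            · exact hv4 y hy
      | all A₂ =>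
          have hkA : sizeT A₂ < k := by simp [sizeT] at hk; omega
          constructor
          · intro hA ρ u hu
            obtain ⟨hPosA₂, h02⟩ := PosTy_all_inv hA
            obtain ⟨m, hm⟩ := exists_fresh_nat
              (((Ty.all A₂).fv).image ρ ∪ (Lam.fv u).biUnion (fun x => Ty.fv (gty x)))
            have hmi : ∀ j, FTp A₂ (j+1) → ρ j ≠ m := by
              intro j hj heq
              refine hm (Finset.mem_union_left _ ?_)
              exact Finset.mem_image.2 ⟨j, (mem_tfv_iff _ _).2 hj, heq⟩
            have hmii : ∀ x, FVp u x → ¬ FTp (gty x) m := by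
              intro x hx hFT
              refine hm (Finset.mem_union_right _ ?_)
              exact Finset.mem_biUnion.2 ⟨x, (mem_fv_iff u x).2 hx, (mem_tfv_iff _ _).2 hFT⟩
            have hu2 : u ∈ interp A₂ (fun n => I0 t0 (rcons m ρ n)) := by
              change u ∈ ⋂ (G : Set Lam) (_ : Saturated G),
                interp A₂ (Interp.cons G (fun n => I0 t0 (ρ n))) at hu
              simp only [Set.mem_iInter] at hu
              have h := hu (I0 t0 m) (I0_sat t0 m)
              have henv : Interp.cons (I0 t0 m) (fun n => I0 t0 (ρ n)) =
                  (fun n => I0 t0 (rcons m ρ n)) := by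
                funext n
                cases n <;> rfl
              rwa [henv] at h
            obtain ⟨u', h1, h2, h3, h4⟩ := (ih _ hkA A₂ (le_refl _)).1 hPosA₂ (rcons m ρ) u hu2
            have h5 := TyJ0_renT h3 (fun j => if j = m then 0 else j + 1)
            have hty_eq : renT (fun j => if j = m then 0 else j + 1) (renT (rcons m ρ) A₂) =
                renT (liftR ρ) A₂ := by
              rw [renT_comp]
              apply renT_congr
              intro j hj
              cases j with
              | zero => simp [Function.comp, rcons, liftR]
              | succ j =>
                  simp only [Function.comp, rcons, liftR]
                  have : ¬ (ρ j = m) := hmi j hj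
                  simp [this]
            rw [hty_eq] at h5
            have h6 : TyJ0 (Ctx.liftTy GammaI) u' (renT (liftR ρ) A₂) := by
              refine TyJ0_fv h5 (Ctx.liftTy GammaI) ?_
              intro x hx
              have hxu : FVp u x := FVp_betastar h1 hx
              show (mapCtx (fun j => if j = m then 0 else j + 1) GammaI) x =
                Ctx.liftTy GammaI x
              simp only [mapCtx, Ctx.liftTy, GammaI_eq, Option.map_some]
              congr 1
              rw [liftT0_eq_renT]
              apply renT_congr
              intro kk hkk
              have : ¬ (kk = m) := fun hc => hmii x hxu (hc ▸ hkk)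
              simp [this]
            exact ⟨u', h1, h2, TyJ0.allI h6, h4⟩
          · intro hA
            exact absurd hA (not_negTy_all A₂)

end LC

/-- Theorem 4: for a ∀⁺ type `A`, `t ∈ |A|` iff `t` β-reduces to
a term typable of type `A` in System F0. -/
theorem completeness_F0 (A : Ty) (hA : PosTy A) (t : Lam) :
    t ∈ Sem A ↔ ∃ t', Lam.BetaStar t t' ∧ TyJ0 Ctx.empty t' A := by
  constructor
  · intro h
    have ht : t ∈ interp A (LC.I0 t) := h (LC.I0 t) (LC.I0_sat t)
    have ht' : t ∈ interp A (fun n => LC.I0 t (id n)) := ht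
    obtain ⟨t', h1, _, h3, h4⟩ := (LC.PN t (LC.sizeT A) A (le_refl _)).1 hA id t ht'
    rw [LC.renT_id] at h3
    refine ⟨t', h1, LC.TyJ0_fv h3 Ctx.empty ?_⟩
    intro x hx
    exact absurd (LC.FVp_betastar h1 hx) (h4 x hx)
  · exact LC.backward_dir
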